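/- arXiv:2510.20648 — 6 statements merged into one kernel-verified Lean document; each statement's English description precedes it below -/
import Mathlib

section
/- The Catalan constant G = ∑_{n≥0} (-1)^n/(2n+1)^2 equals the double integral of 1/(1-x²-y²) over the simplex Δ = {(x,y) ∈ ℝ² : x ≥ 0, y ≥ 0, 1-x-y ≥ 0}. -/
open MeasureTheory Real Set

lemma exp_neg_image : (fun x : ℝ => Real.exp (-x)) '' (Ioi 0) = Ioo 0 1 := by
  ext t
  constructor
  · rintro ⟨x, hx, rfl⟩
    exact ⟨Real.exp_pos _, Real.exp_lt_one_iff.mpr (by simpa using hx)⟩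
  · rintro ⟨h0, h1⟩
    exact ⟨-Real.log t, by simpa using Real.log_neg h0 h1, by simp [Real.exp_log h0]⟩

lemma exp_neg_derivWithin : ∀ x ∈ Ioi (0:ℝ), HasDerivWithinAt (fun x : ℝ => Real.exp (-x))
    (-Real.exp (-x)) (Ioi 0) x := by
  intro x _
  have h : HasDerivAt (fun x : ℝ => Real.exp (-x)) (Real.exp (-x) * (-1)) x :=
    (hasDerivAt_id x).neg.exp
  simpa [mul_comm] using h.hasDerivWithinAt

lemma exp_neg_injOn : InjOn (fun x : ℝ => Real.exp (-x)) (Ioi 0) := fun a _ b _ h => by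
  have := Real.exp_eq_exp.mp h; linarith

lemma key_integrand_eq (n : ℕ) : ∀ x ∈ Ioi (0:ℝ),
    |(-Real.exp (-x))| • ((Real.exp (-x)) ^ (2*n) * (-Real.log (Real.exp (-x))))
      = x ^ (1:ℝ) * Real.exp (-((2*(n:ℝ)+1)) * x) := by
  intro x hx
  rw [abs_neg, abs_of_pos (Real.exp_pos _), Real.log_exp, Real.rpow_one, ← Real.exp_nat_mul,
    smul_eq_mul, neg_neg]
  rw [show Real.exp (-x) * (Real.exp (↑(2*n) * -x) * x) = x * (Real.exp (-x) * Real.exp (↑(2*n) * -x)) by ring,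
    ← Real.exp_add]
  congr 1
  push_cast
  ring

lemma integral_pow_neg_log (n : ℕ) :
    ∫ t in Ioo (0:ℝ) 1, t ^ (2*n) * (-Real.log t) = 1 / (2*(n:ℝ)+1)^2 := by
  have hb : (0:ℝ) < 2*(n:ℝ)+1 := by positivity
  rw [← exp_neg_image,
    integral_image_eq_integral_abs_deriv_smul measurableSet_Ioi exp_neg_derivWithin exp_neg_injOn]
  rw [setIntegral_congr_fun measurableSet_Ioi (key_integrand_eq n)]
  rw [show (∫ x in Ioi (0:ℝ), x ^ (1:ℝ) * Real.exp (-((2*(n:ℝ)+1)) * x))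
      = ∫ x in Ioi (0:ℝ), x ^ (1:ℝ) * Real.exp (-((2*(n:ℝ)+1)) * x ^ (1:ℝ)) from
    setIntegral_congr_fun measurableSet_Ioi (fun x hx => by rw [Real.rpow_one])]
  rw [integral_rpow_mul_exp_neg_mul_rpow one_pos (by norm_num) hb]
  have h2 : ((1:ℝ)+1)/1 = 2 := by norm_num
  have h3 : (-((1:ℝ)+1)/1) = ((-2:ℤ):ℝ) := by norm_num
  rw [h2, h3, Real.Gamma_two, mul_one, Real.rpow_intCast, zpow_neg, one_div]
  norm_num [zpow_two, sq]

lemma integrableOn_pow_neg_log (n : ℕ) :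
    IntegrableOn (fun t => t ^ (2*n) * (-Real.log t)) (Ioo (0:ℝ) 1) := by
  rw [← exp_neg_image,
    integrableOn_image_iff_integrableOn_abs_deriv_smul measurableSet_Ioi exp_neg_derivWithin
      exp_neg_injOn]
  refine ((integrableOn_rpow_mul_exp_neg_mul_rpow (p := 1) (s := 1)
    (by norm_num) one_pos (show (0:ℝ) < 2*(n:ℝ)+1 by positivity)).congr_fun ?_
    measurableSet_Ioi)
  intro x hx
  have h := (key_integrand_eq n) x hx
  simp only [Real.rpow_one] at h ⊢
  exact h.symm


lemma summable_aux : Summable (fun n : ℕ => 1 / (2*(n:ℝ)+1)^2) := by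
  have h : Summable (fun n : ℕ => 1 / ((n:ℝ)+1)^2) := by
    have := (summable_nat_add_iff (f := fun n : ℕ => 1 / (n:ℝ)^2) 1).mpr
      (Real.summable_one_div_nat_pow.mpr one_lt_two)
    refine this.congr fun n => ?_
    push_cast; ring_nf
  refine Summable.of_nonneg_of_le (fun n => by positivity) (fun n => ?_) h
  have h1 : ((n:ℝ)+1) ≤ 2*(n:ℝ)+1 := by linarith [Nat.cast_nonneg (α := ℝ) n]
  have h2 : (0:ℝ) < ((n:ℝ)+1)^2 := by positivity
  exact one_div_le_one_div_of_le h2 (by nlinarith)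

lemma series_eval :
    ∫ t in Ioo (0:ℝ) 1, (-Real.log t) / (1 + t^2) = ∑' n : ℕ, (-1 : ℝ) ^ n / (2 * n + 1) ^ 2 := by
  have hmeas : ∀ n : ℕ, AEStronglyMeasurable
      (fun t : ℝ => (-1:ℝ)^n * t^(2*n) * (-Real.log t)) (volume.restrict (Ioo 0 1)) :=
    fun n => (((measurable_id.pow_const (2*n)).const_mul _).mul
      Real.measurable_log.neg).aestronglyMeasurable
  have hnormint : ∀ n : ℕ, ∫⁻ t, ‖(-1:ℝ)^n * t^(2*n) * (-Real.log t)‖₊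
      ∂(volume.restrict (Ioo 0 1)) = ENNReal.ofReal (1 / (2*(n:ℝ)+1)^2) := by
    intro n
    have heq : ∀ᵐ t ∂(volume.restrict (Ioo (0:ℝ) 1)),
        (‖(-1:ℝ)^n * t^(2*n) * (-Real.log t)‖₊ : ENNReal)
          = ENNReal.ofReal (t^(2*n) * (-Real.log t)) := by
      refine (ae_restrict_iff' measurableSet_Ioo).mpr (ae_of_all _ fun t ht => ?_)
      rw [← enorm_eq_nnnorm, ← ofReal_norm]
      congr 1
      rw [norm_mul, norm_mul, norm_pow, norm_neg, norm_one, one_pow, one_mul]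
      rw [Real.norm_eq_abs, Real.norm_eq_abs, abs_of_nonneg (pow_nonneg ht.1.le _),
        abs_of_nonneg (by simpa using (Real.log_nonpos ht.1.le ht.2.le))]
    rw [lintegral_congr_ae heq,
      ← ofReal_integral_eq_lintegral_ofReal (integrableOn_pow_neg_log n)
        ((ae_restrict_iff' measurableSet_Ioo).mpr (ae_of_all _ fun t ht =>
          mul_nonneg (pow_nonneg ht.1.le _) (by simpa using (Real.log_nonpos ht.1.le ht.2.le)))),
      integral_pow_neg_log n]
  have hsum : ∑' n : ℕ, ∫⁻ t, ‖(-1:ℝ)^n * t^(2*n) * (-Real.log t)‖₊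
      ∂(volume.restrict (Ioo 0 1)) ≠ ⊤ := by
    simp_rw [hnormint]
    rw [← ENNReal.ofReal_tsum_of_nonneg (fun n => by positivity) summable_aux]
    exact ENNReal.ofReal_ne_top
  have key := integral_tsum hmeas hsum
  have hpt : ∀ t ∈ Ioo (0:ℝ) 1,
      (∑' n : ℕ, (-1:ℝ)^n * t^(2*n) * (-Real.log t)) = (-Real.log t) / (1 + t^2) := by
    intro t ht
    have hlt : ‖-t^2‖ < 1 := by
      rw [norm_neg, norm_pow, Real.norm_eq_abs, abs_of_nonneg ht.1.le]
      nlinarith [ht.1, ht.2]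
    calc (∑' n : ℕ, (-1:ℝ)^n * t^(2*n) * (-Real.log t))
        = ∑' n : ℕ, (-t^2)^n * (-Real.log t) := by
          refine tsum_congr fun n => ?_
          rw [neg_pow (t^2) n, pow_mul]
      _ = (∑' n : ℕ, (-t^2)^n) * (-Real.log t) := tsum_mul_right
      _ = (1 - (-t^2))⁻¹ * (-Real.log t) := by rw [tsum_geometric_of_norm_lt_one hlt]
      _ = (-Real.log t) / (1 + t^2) := by rw [sub_neg_eq_add]; ring
  rw [← setIntegral_congr_fun measurableSet_Ioo hpt, key]
  refine tsum_congr fun n => ?_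
  simp_rw [mul_assoc]
  rw [integral_const_mul, integral_pow_neg_log n, mul_one_div]


noncomputable def gfun (x : ℝ) : ℝ :=
  (Real.log (Real.sqrt (1-x^2) + (1-x)) - Real.log (Real.sqrt (1-x^2) - (1-x)))
    / (2 * Real.sqrt (1-x^2))

lemma phi_deriv : ∀ t ∈ Ioo (0:ℝ) 1, HasDerivWithinAt (fun t : ℝ => 2*t/(1+t^2))
    (2*(1-t^2)/(1+t^2)^2) (Ioo 0 1) t := by
  intro t _
  have hd : (1:ℝ) + t^2 ≠ 0 := by positivity
  have h1 : HasDerivAt (fun t : ℝ => 2*t) 2 t := by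
    simpa using (hasDerivAt_id t).const_mul 2
  have h2 : HasDerivAt (fun t : ℝ => 1+t^2) (2*t) t := by
    simpa using ((hasDerivAt_pow 2 t).const_add 1)
  have h := h1.div h2 hd
  refine HasDerivAt.hasDerivWithinAt (h.congr_deriv (by ring))

lemma phi_injOn : InjOn (fun t : ℝ => 2*t/(1+t^2)) (Ioo 0 1) := by
  intro a ha b hb h
  have ha2 : (1:ℝ) + a^2 ≠ 0 := by positivity
  have hb2 : (1:ℝ) + b^2 ≠ 0 := by positivity
  simp only at h
  rw [div_eq_div_iff ha2 hb2] at h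
  have h2 : (a - b) * (1 - a*b) = 0 := by linear_combination h/2
  rcases mul_eq_zero.mp h2 with h3 | h3
  · linarith
  · nlinarith [ha.1, ha.2, hb.1, hb.2]

lemma phi_image : (fun t : ℝ => 2*t/(1+t^2)) '' (Ioo 0 1) = Ioo 0 1 := by
  ext x
  constructor
  · rintro ⟨t, ht, rfl⟩
    have h2 : (0:ℝ) < 1 + t^2 := by positivity
    refine ⟨div_pos (by linarith [ht.1]) h2, ?_⟩
    rw [div_lt_one h2]; nlinarith [ht.1, ht.2]
  · rintro ⟨h0, h1⟩
    have hx2 : (0:ℝ) < 1 - x^2 := by nlinarith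
    set s := Real.sqrt (1 - x^2) with hs
    have hs0 : 0 < s := Real.sqrt_pos.mpr hx2
    have hs2 : s^2 = 1 - x^2 := Real.sq_sqrt hx2.le
    have hs1 : s < 1 := by nlinarith
    have hx0 : x ≠ 0 := ne_of_gt h0
    refine ⟨(1 - s)/x, ⟨div_pos (by linarith) h0, ?_⟩, ?_⟩
    · rw [div_lt_one h0]
      nlinarith
    · have h1s : (1:ℝ) - s ≠ 0 := by linarith
      show 2*((1-s)/x)/(1+((1-s)/x)^2) = x
      have hden : (1:ℝ)+((1-s)/x)^2 ≠ 0 := by positivity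
      field_simp
      linear_combination (-1:ℝ) * hs2

lemma phi_integrand : ∀ t ∈ Ioo (0:ℝ) 1,
    |2*(1-t^2)/(1+t^2)^2| • gfun (2*t/(1+t^2)) = (-Real.log t)/(1+t^2) := by
  intro t ht
  obtain ⟨ht0, ht1⟩ := ht
  have hm : (0:ℝ) < 1 - t^2 := by nlinarith
  have hp : (0:ℝ) < 1 + t^2 := by positivity
  have hx2 : 1 - (2*t/(1+t^2))^2 = ((1-t^2)/(1+t^2))^2 := by field_simp; ring
  have hsqrt : Real.sqrt (1 - (2*t/(1+t^2))^2) = (1-t^2)/(1+t^2) := by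
    rw [hx2, Real.sqrt_sq (by positivity)]
  have h1x : 1 - 2*t/(1+t^2) = (1-t)^2/(1+t^2) := by field_simp; ring
  have hA : Real.sqrt (1 - (2*t/(1+t^2))^2) + (1 - 2*t/(1+t^2)) = 2*(1-t)/(1+t^2) := by
    rw [hsqrt, h1x]; field_simp; ring
  have hB : Real.sqrt (1 - (2*t/(1+t^2))^2) - (1 - 2*t/(1+t^2)) = t * (2*(1-t)/(1+t^2)) := by
    rw [hsqrt, h1x]; field_simp; ring
  have hApos : (0:ℝ) < 2*(1-t)/(1+t^2) := div_pos (by linarith) hp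
  have hlog : Real.log (t * (2*(1-t)/(1+t^2)))
      = Real.log t + Real.log (2*(1-t)/(1+t^2)) :=
    Real.log_mul (ne_of_gt ht0) (ne_of_gt hApos)
  rw [smul_eq_mul, abs_of_pos (div_pos (by linarith) (by positivity))]
  unfold gfun
  rw [hA, hB, hsqrt, hlog]
  field_simp
  ring

lemma integrableOn_psi : IntegrableOn (fun t => (-Real.log t)/(1+t^2)) (Ioo (0:ℝ) 1) := by
  refine Integrable.mono (integrableOn_pow_neg_log 0)
    ((Real.measurable_log.neg.div
      (measurable_const.add (measurable_id.pow_const 2))).aestronglyMeasurable) ?_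
  refine (ae_restrict_iff' measurableSet_Ioo).mpr (ae_of_all _ fun t ht => ?_)
  simp only [pow_zero, one_mul, Real.norm_eq_abs, abs_div, norm_div, norm_neg]
  have h1 : (1:ℝ) ≤ |1 + t^2| := by rw [abs_of_pos (by positivity)]; nlinarith
  calc |Real.log t| / |1 + t^2| ≤ |Real.log t| := div_le_self (abs_nonneg _) h1
    _ = |t ^ (2*0) * -Real.log t| := by rw [pow_zero, one_mul, abs_neg]

lemma subst_x : ∫ x in Ioo (0:ℝ) 1, gfun x = ∫ t in Ioo (0:ℝ) 1, (-Real.log t)/(1+t^2) := by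
  conv_lhs => rw [← phi_image,
    integral_image_eq_integral_abs_deriv_smul measurableSet_Ioo phi_deriv phi_injOn]
  exact setIntegral_congr_fun measurableSet_Ioo phi_integrand

lemma integrableOn_gfun : IntegrableOn gfun (Ioo (0:ℝ) 1) := by
  rw [← phi_image,
    integrableOn_image_iff_integrableOn_abs_deriv_smul measurableSet_Ioo phi_deriv phi_injOn]
  exact integrableOn_psi.congr_fun (fun t ht => (phi_integrand t ht).symm) measurableSet_Ioo


lemma inner_cont {x : ℝ} (hx : x ∈ Ioo (0:ℝ) 1) :
    ContinuousOn (fun y : ℝ => 1/(1 - x^2 - y^2)) (Icc 0 (1-x)) := by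
  obtain ⟨hx0, hx1⟩ := hx
  refine continuousOn_const.div (by fun_prop) fun y hy => ?_
  obtain ⟨hy0, hy1⟩ := hy
  have : y^2 ≤ (1-x)^2 := by nlinarith
  nlinarith

lemma inner_ftc {x : ℝ} (hx : x ∈ Ioo (0:ℝ) 1) :
    ∫ y in (0:ℝ)..(1-x), 1/(1 - x^2 - y^2) = gfun x := by
  obtain ⟨hx0, hx1⟩ := hx
  have hx2 : (0:ℝ) < 1 - x^2 := by nlinarith
  set a := Real.sqrt (1 - x^2) with hadef
  have ha : 0 < a := Real.sqrt_pos.mpr hx2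
  have ha2 : a^2 = 1 - x^2 := Real.sq_sqrt hx2.le
  have hagt : 1 - x < a := by nlinarith [ha, ha2, sq_nonneg (a - (1-x))]
  have hle : (0:ℝ) ≤ 1 - x := by linarith
  have hderiv : ∀ y ∈ uIcc (0:ℝ) (1-x),
      HasDerivAt (fun y : ℝ => (Real.log (a+y) - Real.log (a-y))/(2*a))
        (1/(1 - x^2 - y^2)) y := by
    intro y hy
    rw [uIcc_of_le hle] at hy
    obtain ⟨hy0, hy1⟩ := hy
    have hp1 : (0:ℝ) < a + y := by linarith
    have hp2 : (0:ℝ) < a - y := by linarith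
    have h1 : HasDerivAt (fun y : ℝ => Real.log (a+y)) (1/(a+y)) y := by
      have := (((hasDerivAt_id y).const_add a).log (ne_of_gt hp1))
      simpa using this
    have h2 : HasDerivAt (fun y : ℝ => Real.log (a-y)) ((-1)/(a-y)) y := by
      have := (((hasDerivAt_id y).const_sub a).log (ne_of_gt hp2))
      simpa using this
    have h3 := (h1.sub h2).div_const (2*a)
    refine h3.congr_deriv ?_
    have hfac : 1 - x^2 - y^2 = (a+y)*(a-y) := by rw [← ha2]; ring
    rw [hfac]
    field_simp
    ring
  have hint : IntervalIntegrable (fun y : ℝ => 1/(1 - x^2 - y^2)) volume 0 (1-x) := by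
    refine (inner_cont ⟨hx0, hx1⟩).intervalIntegrable_of_Icc hle
  rw [intervalIntegral.integral_eq_sub_of_hasDerivAt hderiv hint]
  unfold gfun
  rw [← hadef]
  rw [add_zero, sub_zero, sub_self, zero_div, sub_zero]

lemma denom_pos {x y : ℝ} (hx : x ∈ Ioo (0:ℝ) 1) (hy : y ∈ Icc (0:ℝ) (1-x)) :
    0 < 1 - x^2 - y^2 := by
  obtain ⟨hx0, hx1⟩ := hx; obtain ⟨hy0, hy1⟩ := hy
  have : y^2 ≤ (1-x)^2 := by nlinarith
  nlinarith

lemma slice_lintegral {x : ℝ} (hx : x ∈ Ioo (0:ℝ) 1) :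
    ∫⁻ y in Icc (0:ℝ) (1-x), ENNReal.ofReal (1/(1 - x^2 - y^2))
      = ENNReal.ofReal (gfun x) := by
  have hle : (0:ℝ) ≤ 1 - x := by linarith [hx.2]
  have hint : IntegrableOn (fun y : ℝ => 1/(1 - x^2 - y^2)) (Icc 0 (1-x)) :=
    (inner_cont hx).integrableOn_Icc
  have hnn : 0 ≤ᵐ[volume.restrict (Icc (0:ℝ) (1-x))] (fun y : ℝ => 1/(1 - x^2 - y^2)) :=
    (ae_restrict_iff' measurableSet_Icc).mpr (ae_of_all _ fun y hy =>
      le_of_lt (one_div_pos.mpr (denom_pos hx hy)))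
  rw [← ofReal_integral_eq_lintegral_ofReal hint hnn]
  congr 1
  rw [integral_Icc_eq_integral_Ioc, ← intervalIntegral.integral_of_le hle, inner_ftc hx]

lemma tonelli_step :
    ∫⁻ p in {p : ℝ × ℝ | 0 ≤ p.1 ∧ 0 ≤ p.2 ∧ 0 ≤ 1 - p.1 - p.2},
      ENNReal.ofReal (1 / (1 - p.1 ^ 2 - p.2 ^ 2))
    = ∫⁻ x in Ioo (0:ℝ) 1, ENNReal.ofReal (gfun x) := by
  set Δ : Set (ℝ × ℝ) := {p : ℝ × ℝ | 0 ≤ p.1 ∧ 0 ≤ p.2 ∧ 0 ≤ 1 - p.1 - p.2} with hΔdef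
  set F : ℝ × ℝ → ENNReal := fun p => ENNReal.ofReal (1 / (1 - p.1 ^ 2 - p.2 ^ 2)) with hFdef
  have hΔ : MeasurableSet Δ := by
    rw [hΔdef]
    simp only [Set.setOf_and]
    exact (measurableSet_le measurable_const measurable_fst).inter
      ((measurableSet_le measurable_const measurable_snd).inter
        (measurableSet_le measurable_const
          ((measurable_const.sub measurable_fst).sub measurable_snd)))
  have hmeasF : Measurable F :=
    ENNReal.measurable_ofReal.comp (measurable_const.div
      ((measurable_const.sub (measurable_fst.pow_const 2)).sub (measurable_snd.pow_const 2)))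
  rw [← lintegral_indicator hΔ, Measure.volume_eq_prod,
    lintegral_prod _ (hmeasF.indicator hΔ).aemeasurable]
  rw [← lintegral_indicator measurableSet_Ioo]
  refine lintegral_congr_ae ?_
  have h01 : ∀ᵐ x : ℝ, x ∉ ({0,1} : Set ℝ) := by
    have hz : volume ({0,1} : Set ℝ) = 0 :=
      ((Set.finite_singleton (1:ℝ)).insert 0).measure_zero _
    exact measure_eq_zero_iff_ae_notMem.mp hz
  filter_upwards [h01] with x hx01
  by_cases hx1 : x ∈ Ioo (0:ℝ) 1
  · have hsl : ∀ y : ℝ, Δ.indicator F (x,y)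
        = (Icc 0 (1-x)).indicator (fun y : ℝ => ENNReal.ofReal (1/(1 - x^2 - y^2))) y := by
      intro y
      by_cases hy : y ∈ Icc (0:ℝ) (1-x)
      · rw [Set.indicator_of_mem hy,
          Set.indicator_of_mem (show (x,y) ∈ Δ from ⟨hx1.1.le, hy.1, by linarith [hy.2]⟩)]
      · rw [Set.indicator_of_notMem hy, Set.indicator_of_notMem]
        rintro ⟨-, h2, h3⟩
        exact hy ⟨h2, by simp only at h3; linarith⟩
    simp only [hsl]
    rw [lintegral_indicator measurableSet_Icc, slice_lintegral hx1,
      Set.indicator_of_mem hx1]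
  · have hcase : x < 0 ∨ 1 < x := by
      simp only [Set.mem_insert_iff, Set.mem_singleton_iff, not_or] at hx01
      simp only [Set.mem_Ioo, not_and, not_lt] at hx1
      rcases lt_trichotomy x 0 with h | h | h
      · exact Or.inl h
      · exact absurd h hx01.1
      · rcases lt_or_eq_of_le (hx1 h) with h' | h'
        · exact Or.inr h'
        · exact absurd h'.symm hx01.2
    have hempty : ∀ y : ℝ, (x,y) ∉ Δ := by
      rintro y ⟨h1, h2, h3⟩
      simp only at h1 h2 h3
      rcases hcase with h | h
      · linarith
      · linarith
    simp only [Set.indicator_of_notMem (hempty _), Set.indicator_of_notMem hx1,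
      lintegral_zero]

lemma gfun_nonneg {x : ℝ} (hx : x ∈ Ioo (0:ℝ) 1) : 0 ≤ gfun x := by
  obtain ⟨hx0, hx1⟩ := hx
  have hx2 : (0:ℝ) < 1 - x^2 := by nlinarith
  set a := Real.sqrt (1 - x^2) with hadef
  have ha : 0 < a := Real.sqrt_pos.mpr hx2
  have ha2 : a^2 = 1 - x^2 := Real.sq_sqrt hx2.le
  have hagt : 1 - x < a := by nlinarith [ha, ha2, sq_nonneg (a - (1-x))]
  unfold gfun
  rw [← hadef]
  apply div_nonneg _ (by positivity)
  have hlog : Real.log (a - (1-x)) ≤ Real.log (a + (1-x)) := by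
    apply Real.log_le_log (by linarith)
    linarith
  linarith

open MeasureTheory

/-- The Catalan constant `G = ∑_{n≥0} (-1)^n/(2n+1)^2` equals the double integral of
`1/(1-x²-y²)` over the simplex `Δ = {(x,y) : x ≥ 0, y ≥ 0, 1-x-y ≥ 0}`. -/
theorem catalan_eq_integral_simplex :
    ∫ p : ℝ × ℝ in {p : ℝ × ℝ | 0 ≤ p.1 ∧ 0 ≤ p.2 ∧ 0 ≤ 1 - p.1 - p.2},
        1 / (1 - p.1 ^ 2 - p.2 ^ 2) =
      ∑' n : ℕ, (-1 : ℝ) ^ n / (2 * n + 1) ^ 2 := by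
  set Δ : Set (ℝ × ℝ) := {p : ℝ × ℝ | 0 ≤ p.1 ∧ 0 ≤ p.2 ∧ 0 ≤ 1 - p.1 - p.2} with hΔdef
  have hΔ : MeasurableSet Δ := by
    rw [hΔdef]
    simp only [Set.setOf_and]
    exact (measurableSet_le measurable_const measurable_fst).inter
      ((measurableSet_le measurable_const measurable_snd).inter
        (measurableSet_le measurable_const
          ((measurable_const.sub measurable_fst).sub measurable_snd)))
  have hnn : 0 ≤ᵐ[volume.restrict Δ] fun p : ℝ × ℝ => 1 / (1 - p.1 ^ 2 - p.2 ^ 2) := by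
    refine (ae_restrict_iff' hΔ).mpr (ae_of_all _ ?_)
    rintro ⟨x, y⟩ ⟨h1, h2, h3⟩
    simp only at h1 h2 h3 ⊢
    have hd : 0 ≤ 1 - x^2 - y^2 := by nlinarith
    positivity
  have hms : AEStronglyMeasurable (fun p : ℝ × ℝ => 1 / (1 - p.1 ^ 2 - p.2 ^ 2))
      (volume.restrict Δ) :=
    (measurable_const.div
      ((measurable_const.sub (measurable_fst.pow_const 2)).sub
        (measurable_snd.pow_const 2))).aestronglyMeasurable
  rw [integral_eq_lintegral_of_nonneg_ae hnn hms]
  rw [tonelli_step]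
  have hgnn : 0 ≤ᵐ[volume.restrict (Ioo (0:ℝ) 1)] gfun :=
    (ae_restrict_iff' measurableSet_Ioo).mpr (ae_of_all _ fun x hx => gfun_nonneg hx)
  rw [← ofReal_integral_eq_lintegral_ofReal integrableOn_gfun hgnn]
  rw [ENNReal.toReal_ofReal (setIntegral_nonneg measurableSet_Ioo fun x hx => gfun_nonneg hx)]
  rw [subst_x, series_eval]
end

section
/- The double integral over the simplex Δ = {(x,y) : x, y, 1-x-y ≥ 0} of x⁴y⁴/(1-x²-y²)³ equals -49/384 + (9/64)·G, where G is the Catalan constant. -/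
open MeasureTheory Real Set Filter Topology intervalIntegral

noncomputable section CatalanAux

/-- `arctan u / u` -/
def hfun (u : ℝ) : ℝ := Real.arctan u / u

/-- inverse hyperbolic tangent (own def with junk values) -/
def atnh (x : ℝ) : ℝ := (Real.log (1 + x) - Real.log (1 - x)) / 2

/-- primitive of `hfun` -/
def prim (x : ℝ) : ℝ := ∫ u in (0:ℝ)..x, hfun u

lemma hfun_meas : Measurable hfun := by
  exact Real.continuous_arctan.measurable.div measurable_id

lemma abs_arctan_le_abs (u : ℝ) : |Real.arctan u| ≤ |u| := by
  have := (convex_univ (𝕜 := ℝ) (E := ℝ)).norm_image_sub_le_of_norm_hasDerivWithin_le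
    (f := Real.arctan) (f' := fun x => 1/(1+x^2)) (C := 1)
    (fun x _ => (Real.hasDerivAt_arctan x).hasDerivWithinAt) (fun x _ => ?_)
    (Set.mem_univ 0) (Set.mem_univ u)
  · simpa [Real.arctan_zero] using this
  · rw [Real.norm_eq_abs, abs_of_nonneg (by positivity)]
    rw [div_le_one (by positivity)]; nlinarith [sq_nonneg x]

lemma hfun_abs_le_one (u : ℝ) : |hfun u| ≤ 1 := by
  rcases eq_or_ne u 0 with rfl | hu
  · simp [hfun]
  · rw [hfun, abs_div, div_le_one (by positivity)]
    exact abs_arctan_le_abs u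

lemma hfun_intInt (a b : ℝ) : IntervalIntegrable hfun volume a b := by
  constructor <;>
  · apply Measure.integrableOn_of_bounded (by simp) hfun_meas.aestronglyMeasurable
    · filter_upwards with x using by simpa using hfun_abs_le_one x

lemma prim_cont : Continuous prim :=
  intervalIntegral.continuous_primitive (fun a b => hfun_intInt a b) 0

lemma prim_zero : prim 0 = 0 := by simp [prim]

lemma summable_inv_sq : Summable (fun n : ℕ => 1 / ((2*(n:ℝ)+1))^2) := by
  have h1 : Summable (fun n : ℕ => 1 / ((n:ℝ)+1)^2) := by
    have := (Real.summable_one_div_nat_pow (p := 2)).2 (by norm_num)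
    exact (summable_nat_add_iff 1).2 this |>.congr (by intro n; push_cast; ring_nf)
  refine h1.of_nonneg_of_le (fun n => by positivity) (fun n => ?_)
  have h2 : ((n:ℝ)+1)^2 ≤ (2*(n:ℝ)+1)^2 := by nlinarith [Nat.cast_nonneg (α := ℝ) n]
  apply div_le_div_of_nonneg_left (by norm_num) (by positivity) h2

lemma Fterm_int (n : ℕ) :
    ∫ u in Set.Ioo (0:ℝ) 1, u ^ (2*n) = 1 / (2*(n:ℝ)+1) := by
  rw [← MeasureTheory.integral_Ioc_eq_integral_Ioo,
    ← intervalIntegral.integral_of_le (by norm_num : (0:ℝ) ≤ 1),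
    integral_pow]
  push_cast; norm_num

lemma prim_one : prim 1 = ∑' n : ℕ, (-1 : ℝ) ^ n / (2 * n + 1) ^ 2 := by
  classical
  set μ := volume.restrict (Set.Ioo (0:ℝ) 1) with hμ
  set F : ℕ → ℝ → ℝ := fun n u => ((-1:ℝ)) ^ n / (2*(n:ℝ)+1) * u ^ (2*n) with hF
  have hFc : ∀ n, Continuous (F n) := fun n => by
    exact continuous_const.mul (continuous_pow _)
  have hF_int : ∀ n, Integrable (F n) μ := fun n => by
    rw [hμ, ← IntegrableOn]
    exact ((hFc n).integrableOn_Icc (μ := volume) (a := 0) (b := 1)).mono_set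
      Set.Ioo_subset_Icc_self
  have hnorm : ∀ n, (∫ u, ‖F n u‖ ∂μ) = 1/(2*(n:ℝ)+1)^2 := by
    intro n
    have : ∀ u : ℝ, ‖F n u‖ = 1/(2*(n:ℝ)+1) * u ^ (2*n) := by
      intro u
      rw [Real.norm_eq_abs, abs_mul, abs_div, abs_pow, abs_neg, abs_one, one_pow,
        abs_of_pos (by positivity : (0:ℝ) < 2*(n:ℝ)+1), pow_mul, abs_pow, abs_of_nonneg (sq_nonneg u)]
    simp_rw [this]
    rw [MeasureTheory.integral_const_mul, Fterm_int n]
    field_simp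
  have hF_sum : Summable (fun n => ∫ u, ‖F n u‖ ∂μ) := by
    simp_rw [hnorm]; exact summable_inv_sq
  have hswap := MeasureTheory.integral_tsum_of_summable_integral_norm hF_int hF_sum
  have hptw : ∀ u ∈ Set.Ioo (0:ℝ) 1, (∑' n, F n u) = hfun u := by
    intro u hu
    have hu0 : u ≠ 0 := ne_of_gt hu.1
    have h1 : ‖u‖ < 1 := by rw [Real.norm_eq_abs, abs_of_pos hu.1]; exact hu.2
    have := (Real.hasSum_arctan h1).div_const u
    have heq : ∀ n : ℕ, (-1:ℝ) ^ n * u ^ (2 * n + 1) / ↑(2 * n + 1) / u = F n u := by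
      intro n
      rw [hF]; push_cast
      field_simp
      ring
    rw [show hfun u = arctan u / u from rfl, ← (this.tsum_eq)]
    exact tsum_congr fun n => (heq n).symm
  have hcong : ∫ u, (∑' n, F n u) ∂μ = ∫ u, hfun u ∂μ := by
    refine MeasureTheory.integral_congr_ae ?_
    rw [hμ]
    filter_upwards [MeasureTheory.ae_restrict_mem measurableSet_Ioo] with u hu
    exact hptw u hu
  have hval : ∀ n, (∫ u, F n u ∂μ) = (-1:ℝ)^n / (2*(n:ℝ)+1)^2 := by
    intro n
    rw [hF]
    simp only []
    rw [MeasureTheory.integral_const_mul, Fterm_int n]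
    field_simp
  have : prim 1 = ∫ u, hfun u ∂μ := by
    rw [prim, intervalIntegral.integral_of_le (by norm_num : (0:ℝ) ≤ 1),
      MeasureTheory.integral_Ioc_eq_integral_Ioo, hμ]
  rw [this, ← hcong, ← hswap]
  exact tsum_congr fun n => by rw [hval n]


/-- main antiderivative component -/
def cA (t : ℝ) : ℝ := 3/8*Real.arctan t - 5/8*(t/(1+t^2)) + 9/4*(t/(1+t^2)^2)
  - 3*(t/(1+t^2)^3) + 2*(t/(1+t^2)^4) - 3*π/32

def cR (t : ℝ) : ℝ := (1-t^2)^4/(1+t^2)^5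

def cQ (t : ℝ) : ℝ := t*(5+2*t^2+5*t^4)/(8*(1+t^2)^4)

def cAq (t : ℝ) : ℝ := -5/8*(1/(2*(1+t^2))) + 1/4*(1/(1+t^2)^2) - 1/6*(1/(1+t^2)^3)

def cPsi (t : ℝ) : ℝ := 3/16*prim ((1-t)/(1+t)) + cAq t

def cH (t : ℝ) : ℝ := cA t * atnh t

def ctau (y : ℝ) : ℝ := Real.sqrt ((1-y)/(1+y))

def cPhi (y : ℝ) : ℝ := -2*(cH (ctau y) - cPsi (ctau y))

def cLam (y : ℝ) : ℝ := y^3/48 - y^4/16 + 3/8*cPhi y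

def cO (y : ℝ) : ℝ := y^2/16 - y^3/4 + 3/8*y^4*atnh ((1-y)/Real.sqrt (1-y^2))/Real.sqrt (1-y^2)

lemma one_add_sq_ne (t : ℝ) : (1:ℝ)+t^2 ≠ 0 := by positivity

lemma hasDerivAt_one_add_sq (t : ℝ) : HasDerivAt (fun t : ℝ => 1+t^2) (2*t) t := by
  simpa using (hasDerivAt_pow 2 t).const_add 1

lemma cA_deriv (t : ℝ) : HasDerivAt cA (cR t) t := by
  have hs := one_add_sq_ne t
  have h1 := hasDerivAt_one_add_sq t
  have ha := Real.hasDerivAt_arctan t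
  have h2 : HasDerivAt (fun t : ℝ => t/(1+t^2))
      ((1*(1+t^2) - t*(2*t))/((1+t^2)^2)) t := (hasDerivAt_id t).div h1 hs
  have h3 : HasDerivAt (fun t : ℝ => t/(1+t^2)^2)
      ((1*((1+t^2)^2) - t*(2*(1+t^2)^(2-1)*(2*t)))/(((1+t^2)^2)^2)) t :=
    (hasDerivAt_id t).div (h1.pow 2) (pow_ne_zero 2 hs)
  have h4 : HasDerivAt (fun t : ℝ => t/(1+t^2)^3)
      ((1*((1+t^2)^3) - t*(3*(1+t^2)^(3-1)*(2*t)))/(((1+t^2)^3)^2)) t :=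
    (hasDerivAt_id t).div (h1.pow 3) (pow_ne_zero 3 hs)
  have h5 : HasDerivAt (fun t : ℝ => t/(1+t^2)^4)
      ((1*((1+t^2)^4) - t*(4*(1+t^2)^(4-1)*(2*t)))/(((1+t^2)^4)^2)) t :=
    (hasDerivAt_id t).div (h1.pow 4) (pow_ne_zero 4 hs)
  have := ((((((ha.const_mul (3/8)).sub (h2.const_mul (5/8))).add
      (h3.const_mul (9/4))).sub (h4.const_mul 3)).add
      (h5.const_mul 2)).sub_const (3*π/32))
  refine this.congr_deriv (Eq.symm ?_)
  unfold cR
  field_simp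
  ring

lemma cAq_deriv (t : ℝ) : HasDerivAt cAq (cQ t) t := by
  have hs := one_add_sq_ne t
  have h1 := hasDerivAt_one_add_sq t
  have h2 : HasDerivAt (fun t : ℝ => 1/(2*(1+t^2)))
      (-(2*(2*t))/((2*(1+t^2))^2)) t := by
    exact ((hasDerivAt_const t (1:ℝ)).div (h1.const_mul 2) (by positivity)).congr_deriv (by ring)
  have h3 : HasDerivAt (fun t : ℝ => 1/(1+t^2)^2)
      (-(2*(1+t^2)^(2-1)*(2*t))/(((1+t^2)^2)^2) ) t := by
    exact ((hasDerivAt_const t (1:ℝ)).div (h1.pow 2) (pow_ne_zero 2 hs)).congr_deriv (by simp only [Pi.pow_apply]; ring)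
  have h4 : HasDerivAt (fun t : ℝ => 1/(1+t^2)^3)
      (-(3*(1+t^2)^(3-1)*(2*t))/(((1+t^2)^3)^2) ) t := by
    exact ((hasDerivAt_const t (1:ℝ)).div (h1.pow 3) (pow_ne_zero 3 hs)).congr_deriv (by simp only [Pi.pow_apply]; ring)
  have := ((h2.const_mul (-5/8)).add (h3.const_mul (1/4))).sub (h4.const_mul (1/6))
  refine this.congr_deriv (Eq.symm ?_)
  unfold cQ; field_simp; ring

lemma atnh_deriv {t : ℝ} (h1 : -1 < t) (h2 : t < 1) :
    HasDerivAt atnh (1/(1-t^2)) t := by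
  have hp : (0:ℝ) < 1 + t := by linarith
  have hm : (0:ℝ) < 1 - t := by linarith
  have d1 : HasDerivAt (fun t : ℝ => Real.log (1+t)) (1/(1+t)) t := by
    have := (Real.hasDerivAt_log (ne_of_gt hp)).comp t ((hasDerivAt_id t).const_add 1)
    exact this.congr_deriv (by ring)
  have d2 : HasDerivAt (fun t : ℝ => Real.log (1-t)) (-(1/(1-t))) t := by
    have := (Real.hasDerivAt_log (ne_of_gt hm)).comp t ((hasDerivAt_id t).const_sub 1)
    exact this.congr_deriv (by ring)
  have h3 : (1:ℝ) - t^2 ≠ 0 := by nlinarith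
  have := (d1.sub d2).div_const 2
  refine this.congr_deriv (Eq.symm ?_)
  field_simp
  ring


lemma arctan_phi {t : ℝ} (h0 : 0 ≤ t) (h1 : t < 1) :
    Real.arctan ((1-t)/(1+t)) = π/4 - Real.arctan t := by
  have hp : (0:ℝ) < 1 + t := by linarith
  have hm : (0:ℝ) < 1 - t := by linarith
  have hq0 : 0 ≤ (1-t)/(1+t) := le_of_lt (div_pos hm hp)
  have hq1 : (1-t)/(1+t) ≤ 1 := by rw [div_le_one hp]; linarith
  have hlt : t * ((1-t)/(1+t)) < 1 := by nlinarith
  have := Real.arctan_add hlt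
  have harg : (t + (1-t)/(1+t)) / (1 - t * ((1-t)/(1+t))) = 1 := by
    rw [div_eq_one_iff_eq (by nlinarith)]
    field_simp
    ring
  rw [harg, Real.arctan_one] at this
  linarith

lemma cA_one : cA 1 = 0 := by
  unfold cA
  rw [Real.arctan_one]
  ring

lemma cA_key (t : ℝ) : cA t = 3/8*Real.arctan t - 3*π/32 + (1-t^2)*cQ t := by
  unfold cA cQ
  have := one_add_sq_ne t
  field_simp
  ring

lemma hfun_contAt {c : ℝ} (hc : c ≠ 0) : ContinuousAt hfun c :=
  (Real.continuous_arctan.continuousAt).div continuousAt_id hc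

lemma prim_hasDeriv {c : ℝ} (hc : c ≠ 0) : HasDerivAt prim (hfun c) c :=
  intervalIntegral.integral_hasDerivAt_right (hfun_intInt 0 c)
    (hfun_meas.stronglyMeasurable.stronglyMeasurableAtFilter) (hfun_contAt hc)

lemma cPsi_deriv {t : ℝ} (h0 : 0 < t) (h1 : t < 1) :
    HasDerivAt cPsi (-(3/8)*((π/4 - Real.arctan t)/(1-t^2)) + cQ t) t := by
  have hp : (0:ℝ) < 1 + t := by linarith
  have hm : (0:ℝ) < 1 - t := by linarith
  have hφ : HasDerivAt (fun t : ℝ => (1-t)/(1+t))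
      ((-1*(1+t) - (1-t)*1)/(1+t)^2) t :=
    ((hasDerivAt_id t).const_sub 1).div ((hasDerivAt_id t).const_add 1) (ne_of_gt hp)
  have hc : (1-t)/(1+t) ≠ 0 := ne_of_gt (div_pos hm hp)
  have hprim := (prim_hasDeriv hc).comp t hφ
  have := (hprim.const_mul (3/16)).add (cAq_deriv t)
  refine this.congr_deriv (Eq.symm ?_)
  have harctan := arctan_phi h0.le h1
  show _ = 3/16*(hfun ((1-t)/(1+t)) * ((-1*(1+t) - (1-t)*1)/(1+t)^2)) + cQ t
  rw [hfun, harctan]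
  have h2 : (1:ℝ) - t^2 ≠ 0 := by nlinarith
  field_simp
  ring

lemma ctau_sq {y : ℝ} (h0 : 0 < y) (h1 : y < 1) : (ctau y)^2 = (1-y)/(1+y) :=
  Real.sq_sqrt (div_nonneg (by linarith) (by linarith))

lemma ctau_pos {y : ℝ} (h0 : 0 < y) (h1 : y < 1) : 0 < ctau y :=
  Real.sqrt_pos.2 (div_pos (by linarith) (by linarith))

lemma ctau_lt_one {y : ℝ} (h0 : 0 < y) (h1 : y < 1) : ctau y < 1 := by
  have hp : (0:ℝ) < 1 + y := by linarith
  have : (1-y)/(1+y) < 1 := by rw [div_lt_one hp]; linarith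
  calc ctau y < Real.sqrt 1 := Real.sqrt_lt_sqrt (div_nonneg (by linarith) (by linarith)) this
  _ = 1 := Real.sqrt_one

lemma sqrt_one_sub_sq {y : ℝ} (h0 : 0 < y) (h1 : y < 1) :
    Real.sqrt (1-y^2) = ctau y * (1+y) := by
  have hp : (0:ℝ) < 1 + y := by linarith
  rw [show (1:ℝ)-y^2 = ((1-y)/(1+y))*(1+y)^2 by field_simp; ring,
    Real.sqrt_mul (div_nonneg (by linarith) (by linarith)), Real.sqrt_sq hp.le]
  rfl

lemma ctau_deriv {y : ℝ} (h0 : 0 < y) (h1 : y < 1) :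
    HasDerivAt ctau (-1/(ctau y*(1+y)^2)) y := by
  have hp : (0:ℝ) < 1 + y := by linarith
  have hq : (0:ℝ) < (1-y)/(1+y) := div_pos (by linarith) hp
  have hφ : HasDerivAt (fun y : ℝ => (1-y)/(1+y))
      ((-1*(1+y) - (1-y)*1)/(1+y)^2) y :=
    ((hasDerivAt_id y).const_sub 1).div ((hasDerivAt_id y).const_add 1) (ne_of_gt hp)
  have := (Real.hasDerivAt_sqrt (ne_of_gt hq)).comp y hφ
  refine this.congr_deriv (Eq.symm ?_)
  have hτ := ctau_pos h0 h1
  rw [show Real.sqrt ((1-y)/(1+y)) = ctau y from rfl]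
  field_simp
  ring

lemma cLam_deriv {y : ℝ} (hy : y ∈ Set.Ioo (0:ℝ) 1) : HasDerivAt cLam (cO y) y := by
  obtain ⟨h0, h1⟩ := hy
  have hp : (0:ℝ) < 1 + y := by linarith
  set c := ctau y with hcdef
  have hc0 := ctau_pos h0 h1
  have hc1 := ctau_lt_one h0 h1
  have hc2 := ctau_sq h0 h1
  have hcc : (1:ℝ) - c^2 ≠ 0 := by nlinarith
  have e1 : 1 - c^2 = 2*y/(1+y) := by rw [hc2]; field_simp; ring
  have e2 : 1 + c^2 = 2/(1+y) := by rw [hc2]; field_simp; ring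
  have hH : HasDerivAt cH (cR c * atnh c + cA c * (1/(1-c^2))) c :=
    (cA_deriv c).mul (atnh_deriv (by linarith) hc1)
  have hPsi := cPsi_deriv hc0 hc1
  have hτ := ctau_deriv h0 h1
  have hPhi := ((hH.comp y hτ).sub (hPsi.comp y hτ)).const_mul (-2)
  have hpoly : HasDerivAt (fun y : ℝ => y^3/48 - y^4/16)
      ((3:ℕ)*y^2/48 - (4:ℕ)*y^3/16) y := by
    exact ((hasDerivAt_pow 3 y).div_const 48).sub ((hasDerivAt_pow 4 y).div_const 16)
  have big := hpoly.add (hPhi.const_mul (3/8))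
  refine big.congr_deriv (Eq.symm ?_)
  have h1y : 1 - y = c^2*(1+y) := by rw [hc2]; field_simp
  have harg : (1-y)/Real.sqrt (1-y^2) = c := by
    rw [sqrt_one_sub_sq h0 h1, ← hcdef, h1y]
    field_simp
  rw [cA_key c]
  unfold cO cR cQ
  rw [harg, sqrt_one_sub_sq h0 h1, ← hcdef, e1, e2]
  push_cast
  field_simp
  ring


lemma atnh_zero : atnh 0 = 0 := by simp [atnh]

lemma atnh_contAt {t : ℝ} (h1 : -1 < t) (h2 : t < 1) : ContinuousAt atnh t := by
  have c1 : ContinuousAt (fun x : ℝ => Real.log (1+x)) t :=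
    (Real.continuousAt_log (by linarith)).comp
      ((continuous_const.add continuous_id).continuousAt)
  have c2 : ContinuousAt (fun x : ℝ => Real.log (1-x)) t :=
    (Real.continuousAt_log (by linarith : (1:ℝ)-t ≠ 0)).comp
      ((continuous_const.sub continuous_id).continuousAt)
  exact (c1.sub c2).div_const 2

lemma cA_cont : Continuous cA := by
  have h1 : Continuous fun t : ℝ => 1+t^2 := continuous_const.add (continuous_pow 2)
  have c2 : Continuous fun t : ℝ => t/(1+t^2) :=
    continuous_id.div h1 (fun t => one_add_sq_ne t)
  have c3 : Continuous fun t : ℝ => t/(1+t^2)^2 :=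
    continuous_id.div (h1.pow 2) (fun t => pow_ne_zero 2 (one_add_sq_ne t))
  have c4 : Continuous fun t : ℝ => t/(1+t^2)^3 :=
    continuous_id.div (h1.pow 3) (fun t => pow_ne_zero 3 (one_add_sq_ne t))
  have c5 : Continuous fun t : ℝ => t/(1+t^2)^4 :=
    continuous_id.div (h1.pow 4) (fun t => pow_ne_zero 4 (one_add_sq_ne t))
  exact ((((((continuous_const.mul Real.continuous_arctan)).sub
      (continuous_const.mul c2)).add
      (continuous_const.mul c3)).sub (continuous_const.mul c4)).add
      (continuous_const.mul c5)).sub continuous_const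

lemma cAq_cont : Continuous cAq := by
  have h1 : Continuous fun t : ℝ => 1+t^2 := continuous_const.add (continuous_pow 2)
  have c2 : Continuous fun t : ℝ => 1/(2*(1+t^2)) :=
    continuous_const.div (continuous_const.mul h1) (fun t => by positivity)
  have c3 : Continuous fun t : ℝ => 1/(1+t^2)^2 :=
    continuous_const.div (h1.pow 2) (fun t => pow_ne_zero 2 (one_add_sq_ne t))
  have c4 : Continuous fun t : ℝ => 1/(1+t^2)^3 :=
    continuous_const.div (h1.pow 3) (fun t => pow_ne_zero 3 (one_add_sq_ne t))
  exact (((continuous_const.mul c2)).add (continuous_const.mul c3)).sub (continuous_const.mul c4)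

lemma cA_bound {t : ℝ} (ht : t ∈ Set.Icc (0:ℝ) 1) : |cA t| ≤ 1 - t := by
  have key := (convex_Icc (0:ℝ) 1).norm_image_sub_le_of_norm_hasDerivWithin_le
    (f := cA) (f' := cR) (C := 1)
    (fun x _ => (cA_deriv x).hasDerivWithinAt) (fun x hx => ?_) ht
    (Set.mem_Icc.2 ⟨zero_le_one, le_refl 1⟩)
  · have := key
    rw [cA_one] at this
    calc |cA t| = ‖0 - cA t‖ := by rw [zero_sub, norm_neg]; rfl
    _ ≤ 1 * ‖1 - t‖ := this
    _ = 1 - t := by rw [one_mul, Real.norm_eq_abs, abs_of_nonneg (by linarith [ht.2])]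
  · obtain ⟨hx0, hx1⟩ := hx
    have hnum : (0:ℝ) ≤ (1-x^2)^4 := by positivity
    have h4 : (1-x^2)^4 ≤ 1 := by
      apply pow_le_one₀ (by nlinarith) (by nlinarith)
    have h5 : (1:ℝ) ≤ (1+x^2)^5 := one_le_pow₀ (by nlinarith)
    rw [Real.norm_eq_abs, cR, abs_of_nonneg (by positivity)]
    rw [div_le_one (by positivity)]
    linarith

lemma neg_log_le_two_div_sqrt {u : ℝ} (hu : 0 < u) :
    -Real.log u ≤ 2/Real.sqrt u := by
  have hs : 0 < Real.sqrt u := Real.sqrt_pos.2 hu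
  have h1 : Real.log (Real.sqrt u)⁻¹ ≤ (Real.sqrt u)⁻¹ - 1 :=
    Real.log_le_sub_one_of_pos (by positivity)
  have h2 : Real.log (Real.sqrt u) = Real.log u / 2 := Real.log_sqrt hu.le
  rw [Real.log_inv, h2] at h1
  rw [div_eq_mul_inv 2]
  linarith

lemma atnh_nonneg {c : ℝ} (h0 : 0 ≤ c) (h1 : c < 1) : 0 ≤ atnh c := by
  have : Real.log (1-c) ≤ Real.log (1+c) :=
    Real.log_le_log (by linarith) (by linarith)
  unfold atnh; linarith

lemma atnh_le {c : ℝ} (h0 : 0 ≤ c) (h1 : c < 1) : atnh c ≤ c/(1-c) := by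
  have hm : (0:ℝ) < 1 - c := by linarith
  have l1 : Real.log (1+c) ≤ c := by
    have := Real.log_le_sub_one_of_pos (show (0:ℝ) < 1+c by linarith)
    linarith
  have l2 : -Real.log (1-c) ≤ c/(1-c) := by
    have := Real.log_le_sub_one_of_pos (show (0:ℝ) < (1-c)⁻¹ by positivity)
    rw [Real.log_inv] at this
    have e : (1-c)⁻¹ - 1 = c/(1-c) := by field_simp; ring
    linarith [this, e ▸ this]
  have hc : c ≤ c/(1-c) := by
    rw [le_div_iff₀ hm]; nlinarith
  unfold atnh; linarith

lemma cH_one : cH 1 = 0 := by rw [cH, cA_one, zero_mul]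

lemma cH_contOn : ContinuousOn cH (Set.Icc 0 1) := by
  intro t ht
  rcases eq_or_ne t 1 with rfl | hne
  · -- squeeze at t = 1
    rw [ContinuousWithinAt, cH_one]
    have hbound : ∀ᶠ t' in 𝓝[Set.Icc (0:ℝ) 1] 1,
        ‖cH t'‖ ≤ (1-t')*Real.log 2/2 + 2*Real.sqrt (1-t') := by
      filter_upwards [self_mem_nhdsWithin] with t ht'
      obtain ⟨ht0, ht1⟩ := Set.mem_Icc.1 ht'
      rcases eq_or_lt_of_le ht1 with rfl | ht1'
      · simp [cH_one]
      · have hA := cA_bound (Set.mem_Icc.2 ⟨ht0, ht1⟩)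
        have hge := atnh_nonneg ht0 ht1'
        have hm : (0:ℝ) < 1 - t := by linarith
        have hlog2 : atnh t ≤ (Real.log 2 - Real.log (1-t))/2 := by
          have : Real.log (1+t) ≤ Real.log 2 :=
            Real.log_le_log (by linarith) (by linarith)
          unfold atnh; linarith
        have hsq : (1-t)*(-Real.log (1-t)) ≤ 2*Real.sqrt (1-t) := by
          have h2 := neg_log_le_two_div_sqrt hm
          have hs : 0 < Real.sqrt (1-t) := Real.sqrt_pos.2 hm
          have e : (1-t)/Real.sqrt (1-t) = Real.sqrt (1-t) := by
            rw [← Real.sq_sqrt hm.le]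
            field_simp
            rw [Real.sqrt_sq hs.le]
          calc (1-t)*(-Real.log (1-t)) ≤ (1-t)*(2/Real.sqrt (1-t)) := by
                apply mul_le_mul_of_nonneg_left h2 hm.le
          _ = 2*((1-t)/Real.sqrt (1-t)) := by ring
          _ = 2*Real.sqrt (1-t) := by rw [e]
        calc ‖cH t‖ = |cA t| * |atnh t| := by rw [cH]; exact abs_mul _ _
        _ ≤ (1-t) * atnh t := by
            apply mul_le_mul hA (le_of_eq (abs_of_nonneg hge)) (abs_nonneg _) hm.le
        _ ≤ (1-t) * ((Real.log 2 - Real.log (1-t))/2) := by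
            apply mul_le_mul_of_nonneg_left hlog2 hm.le
        _ ≤ (1-t)*Real.log 2/2 + 2*Real.sqrt (1-t) := by
            nlinarith [hsq, Real.sqrt_nonneg (1-t)]
    refine squeeze_zero_norm' hbound ?_
    have hcont : ContinuousWithinAt
          (fun t : ℝ => (1-t)*Real.log 2/2 + 2*Real.sqrt (1-t)) (Set.Icc 0 1) 1 := by
        apply ContinuousWithinAt.add
        · exact (((continuous_const.sub continuous_id).mul continuous_const).div_const
            2).continuousWithinAt
        · exact (continuous_const.mul (Real.continuous_sqrt.comp
            (continuous_const.sub continuous_id))).continuousWithinAt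
    have : ((1:ℝ)-1)*Real.log 2/2 + 2*Real.sqrt (1-1) = 0 := by norm_num
    rw [ContinuousWithinAt, this] at hcont
    exact hcont
  · have ht1 : t < 1 := lt_of_le_of_ne ht.2 hne
    exact (cA_cont.continuousAt.mul (atnh_contAt (by linarith [ht.1]) ht1)).continuousWithinAt

lemma phi_contOn : ContinuousOn (fun t : ℝ => (1-t)/(1+t)) (Set.Icc 0 1) := by
  apply ContinuousOn.div (continuous_const.sub continuous_id).continuousOn
    (continuous_const.add continuous_id).continuousOn
  intro y hy
  simp only [Set.mem_Icc] at hy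
  intro h
  simp only [Pi.add_apply, id_eq] at h
  linarith [hy.1]

lemma ctau_contOn : ContinuousOn ctau (Set.Icc 0 1) :=
  Real.continuous_sqrt.comp_continuousOn phi_contOn

lemma ctau_mapsTo : Set.MapsTo ctau (Set.Icc 0 1) (Set.Icc 0 1) := by
  intro y hy
  obtain ⟨h0, h1⟩ := Set.mem_Icc.1 hy
  constructor
  · exact Real.sqrt_nonneg _
  · rw [ctau]
    have hle : (1-y)/(1+y) ≤ 1 := by rw [div_le_one (by linarith)]; linarith
    calc Real.sqrt ((1-y)/(1+y)) ≤ Real.sqrt 1 := Real.sqrt_le_sqrt hle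
    _ = 1 := Real.sqrt_one

lemma cPsi_contOn : ContinuousOn cPsi (Set.Icc 0 1) := by
  have h1 : ContinuousOn (fun t : ℝ => (3:ℝ)/16*prim ((1-t)/(1+t))) (Set.Icc 0 1) :=
    continuousOn_const.mul (prim_cont.comp_continuousOn phi_contOn)
  exact h1.add cAq_cont.continuousOn

lemma cLam_contOn : ContinuousOn cLam (Set.Icc 0 1) := by
  have hH := cH_contOn.comp ctau_contOn ctau_mapsTo
  have hPsiTau := cPsi_contOn.comp ctau_contOn ctau_mapsTo
  have hPhi : ContinuousOn cPhi (Set.Icc 0 1) :=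
    continuousOn_const.mul (hH.sub hPsiTau)
  exact (((continuous_pow 3).continuousOn.div_const 48).sub
      ((continuous_pow 4).continuousOn.div_const 16)).add
      (continuousOn_const.mul hPhi)


lemma harg_eq {y : ℝ} (h0 : 0 < y) (h1 : y < 1) :
    (1-y)/Real.sqrt (1-y^2) = ctau y := by
  have hc0 := ctau_pos h0 h1
  have hc2 := ctau_sq h0 h1
  have h1y : 1 - y = (ctau y)^2*(1+y) := by rw [hc2]; field_simp
  rw [sqrt_one_sub_sq h0 h1, h1y]
  field_simp

lemma cO_meas : Measurable cO := by
  unfold cO atnh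
  apply Measurable.add
  · exact ((measurable_id.pow_const 2).div_const 16).sub
      ((measurable_id.pow_const 3).div_const 4)
  · apply Measurable.div _ (Real.continuous_sqrt.measurable.comp (by fun_prop))
    apply Measurable.mul (by fun_prop)
    apply Measurable.div_const
    apply Measurable.sub
    · exact Real.measurable_log.comp (by fun_prop)
    · exact Real.measurable_log.comp (by fun_prop)

lemma cO_bound : ∀ y ∈ Set.Ioc (0:ℝ) 1, ‖cO y‖ ≤ 1 := by
  intro y hy
  obtain ⟨h0, h1e⟩ := hy
  rcases eq_or_lt_of_le h1e with rfl | h1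
  · have : cO 1 = 1/16 - 1/4 := by
      rw [cO]
      norm_num [atnh_zero]
    rw [this]; norm_num
  · have hp : (0:ℝ) < 1 + y := by linarith
    set c := ctau y with hcdef
    have hc0 := ctau_pos h0 h1
    have hc1 := ctau_lt_one h0 h1
    have hc2 := ctau_sq h0 h1
    have e1 : 1 - c^2 = 2*y/(1+y) := by rw [hc2]; field_simp; ring
    have h1c : y/(1+y) ≤ 1 - c := by
      have h' : (1-c)*(1+c) = 2*y/(1+y) := by rw [← e1]; ring
      have hdd : 2*y/(1+y) = 2*(y/(1+y)) := by ring
      nlinarith [sq_nonneg (1-c), hdd]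
    have hge := atnh_nonneg hc0.le hc1
    have hle := atnh_le hc0.le hc1
    have hXpos : 0 ≤ 3/8*y^4*atnh c/(c*(1+y)) := by positivity
    have hX : 3/8*y^4*atnh c/(c*(1+y)) ≤ 3/8 := by
      have hy3 : y^4*atnh c/(c*(1+y)) ≤ y^3 := by
        rw [div_le_iff₀ (by positivity)]
        have hu : y^4*atnh c ≤ y^4*(c/(1-c)) :=
          mul_le_mul_of_nonneg_left hle (by positivity)
        have h1c' : y ≤ (1-c)*(1+y) := by
          have := mul_le_mul_of_nonneg_right h1c hp.le
          calc y = y/(1+y)*(1+y) := by field_simp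
          _ ≤ (1-c)*(1+y) := this
        have base := mul_le_mul_of_nonneg_left h1c' (show (0:ℝ) ≤ y^3*c by positivity)
        have hv : y^4*(c/(1-c)) ≤ y^3*(c*(1+y)) := by
          rw [mul_div_assoc', div_le_iff₀ (by linarith : (0:ℝ) < 1-c)]
          nlinarith [base]
        linarith
      calc 3/8*y^4*atnh c/(c*(1+y)) = 3/8*(y^4*atnh c/(c*(1+y))) := by ring
      _ ≤ 3/8*y^3 := by linarith
      _ ≤ 3/8 := by nlinarith [pow_le_one₀ h0.le h1.le (n := 3)]
    have hrw : cO y = y^2/16 - y^3/4 + 3/8*y^4*atnh c/(c*(1+y)) := by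
      rw [cO, harg_eq h0 h1, sqrt_one_sub_sq h0 h1, ← hcdef]
    rw [hrw, Real.norm_eq_abs, abs_le]
    constructor <;> nlinarith [pow_le_one₀ h0.le h1.le (n := 2), pow_le_one₀ h0.le h1.le (n := 3)]

lemma cO_intInt : IntervalIntegrable cO volume 0 1 := by
  rw [intervalIntegrable_iff_integrableOn_Ioc_of_le (by norm_num)]
  apply Measure.integrableOn_of_bounded (by simp) cO_meas.aestronglyMeasurable (M := 1)
  rw [ae_restrict_iff' measurableSet_Ioc]
  exact ae_of_all _ cO_bound

lemma ctau_one : ctau 1 = 0 := by rw [ctau]; norm_num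

lemma ctau_zero : ctau 0 = 1 := by rw [ctau]; norm_num

lemma outer_value : cLam 1 - cLam 0
    = -49/384 + 9/64 * ∑' n : ℕ, (-1:ℝ)^n/(2*(n:ℝ)+1)^2 := by
  have h00 : cH 0 = 0 := by rw [cH, atnh_zero, mul_zero]
  have hPsi0 : cPsi 0 = 3/16 * (∑' n : ℕ, (-1:ℝ)^n/(2*(n:ℝ)+1)^2) - 11/48 := by
    rw [cPsi, show ((1:ℝ)-0)/(1+0) = 1 by norm_num, prim_one, cAq]
    norm_num
    ring
  have hPsi1 : cPsi 1 = -11/96 := by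
    rw [cPsi, show ((1:ℝ)-1)/(1+1) = 0 by norm_num, prim_zero, cAq]
    norm_num
  rw [cLam, cLam, cPhi, cPhi, ctau_one, ctau_zero, cH_one, h00, hPsi0, hPsi1]
  ring

lemma outer : ∫ y in (0:ℝ)..1, cO y
    = -49/384 + 9/64 * ∑' n : ℕ, (-1:ℝ)^n/(2*(n:ℝ)+1)^2 := by
  rw [intervalIntegral.integral_eq_sub_of_hasDeriv_right_of_le (by norm_num) cLam_contOn
    (fun y hy => (cLam_deriv hy).hasDerivWithinAt) cO_intInt]
  exact outer_value


lemma inner_eval {y : ℝ} (h0 : 0 < y) (h1 : y < 1) :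
    (∫ x in (0:ℝ)..(1-y), y^4*x^4/(1-y^2-x^2)^3) = cO y := by
  have hyy : (0:ℝ) < 1 - y^2 := by nlinarith
  set a := Real.sqrt (1-y^2) with hadef
  have ha2 : a^2 = 1-y^2 := Real.sq_sqrt hyy.le
  have ha0 : 0 < a := Real.sqrt_pos.2 hyy
  have hay : 1 - y < a := by nlinarith [ha2, ha0]
  set F : ℝ → ℝ := fun x => y^4*((1-y^2)*x/(4*((1-y^2)-x^2)^2)
    - 5*x/(8*((1-y^2)-x^2)) + 3/(8*a)*atnh (x/a)) with hFdef
  have hderiv : ∀ x ∈ Set.uIcc (0:ℝ) (1-y),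
      HasDerivAt F (y^4*x^4/(1-y^2-x^2)^3) x := by
    intro x hx
    rw [Set.uIcc_of_le (by linarith)] at hx
    obtain ⟨hx0, hx1⟩ := hx
    have hden : 0 < (1-y^2) - x^2 := by nlinarith
    have hxa1 : x/a < 1 := by rw [div_lt_one ha0]; linarith
    have d3 : HasDerivAt (fun x : ℝ => 3/(8*a)*atnh (x/a))
        (3/(8*((1-y^2)-x^2))) x := by
      have hcomp := (atnh_deriv (by have h := div_nonneg hx0 ha0.le; linarith : (-1:ℝ) < x/a) hxa1).comp x
        ((hasDerivAt_id x).div_const a)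
      have := hcomp.const_mul (3/(8*a))
      refine this.congr_deriv (Eq.symm ?_)
      have hxa : (x/a)^2 = x^2/(1-y^2) := by rw [div_pow, ha2]
      rw [hxa]
      have hne : (1:ℝ) - x^2/(1-y^2) ≠ 0 := by
        have : x^2/(1-y^2) < 1 := by rw [div_lt_one hyy]; nlinarith
        linarith
      field_simp
      linear_combination ha2
    have hd : HasDerivAt (fun x : ℝ => (1-y^2)-x^2) (-(2*x)) x := by
      simpa using (hasDerivAt_pow 2 x).const_sub (1-y^2)
    have d1 := ((hasDerivAt_id x).const_mul (1-y^2)).div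
      ((hd.pow 2).const_mul 4) (mul_ne_zero (by norm_num) (pow_ne_zero 2 hden.ne'))
    have d2 := ((hasDerivAt_id x).const_mul 5).div
      (hd.const_mul 8) (mul_ne_zero (by norm_num) hden.ne')
    have hsum := ((d1.sub d2).add d3).const_mul (y^4)
    refine hsum.congr_deriv (Eq.symm ?_)
    have h3 : (1:ℝ)-y^2-x^2 ≠ 0 := by nlinarith
    simp only [Pi.pow_apply, id_eq]
    field_simp
    ring
  have hcont : IntervalIntegrable (fun x => y^4*x^4/(1-y^2-x^2)^3) volume 0 (1-y) := by
    apply ContinuousOn.intervalIntegrable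
    apply ContinuousOn.div (by fun_prop) (by fun_prop)
    intro x hx
    rw [Set.uIcc_of_le (by linarith)] at hx
    exact pow_ne_zero 3 (by nlinarith [hx.1, hx.2])
  rw [intervalIntegral.integral_eq_sub_of_hasDerivAt hderiv hcont]
  have hF0 : F 0 = 0 := by
    rw [hFdef]
    simp [atnh_zero]
  rw [hF0, sub_zero, hFdef, cO, ← hadef]
  have h2y : (1-y^2)-(1-y)^2 ≠ 0 := by nlinarith
  have hy0 : y ≠ 0 := ne_of_gt h0
  field_simp
  ring


section Final

abbrev simplexS : Set (ℝ × ℝ) := {p : ℝ × ℝ | 0 ≤ p.1 ∧ 0 ≤ p.2 ∧ 0 ≤ 1 - p.1 - p.2}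

noncomputable abbrev ff : ℝ × ℝ → ℝ := fun p => p.1 ^ 4 * p.2 ^ 4 / (1 - p.1 ^ 2 - p.2 ^ 2) ^ 3

noncomputable abbrev gg : ℝ × ℝ → ℝ := simplexS.indicator ff

lemma hSm : MeasurableSet simplexS := by
  have h : simplexS = {p : ℝ×ℝ | 0 ≤ p.1} ∩ ({p | 0 ≤ p.2} ∩ {p | 0 ≤ 1 - p.1 - p.2}) := rfl
  rw [h]
  exact ((isClosed_le continuous_const continuous_fst).measurableSet).inter
    (((isClosed_le continuous_const continuous_snd).measurableSet).inter
     ((isClosed_le continuous_const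
        ((continuous_const.sub continuous_fst).sub continuous_snd)).measurableSet))

lemma hfm : Measurable ff :=
  ((measurable_fst.pow_const 4).mul (measurable_snd.pow_const 4)).div
    (((measurable_const.sub (measurable_fst.pow_const 2)).sub
      (measurable_snd.pow_const 2)).pow_const 3)

lemma hgm : Measurable gg := hfm.indicator hSm

lemma gg_nonneg : ∀ p, 0 ≤ gg p := by
  intro p
  show 0 ≤ simplexS.indicator ff p
  by_cases hp : p ∈ simplexS
  · rw [Set.indicator_of_mem hp]
    obtain ⟨h1, h2, h3⟩ := hp
    have hden : (0:ℝ) ≤ 1 - p.1^2 - p.2^2 := by nlinarith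
    positivity
  · rw [Set.indicator_of_notMem hp]

lemma section_eq {x : ℝ} (hx0 : 0 < x) (hx1 : x < 1) :
    (fun yv => gg (x, yv)) = (Set.Icc 0 (1-x)).indicator (fun yv => ff (x, yv)) := by
  funext yv
  by_cases h : yv ∈ Set.Icc (0:ℝ) (1-x)
  · obtain ⟨h1, h2⟩ := Set.mem_Icc.1 h
    rw [Set.indicator_of_mem h]
    exact Set.indicator_of_mem (by exact ⟨hx0.le, h1, by linarith⟩) _
  · rw [Set.indicator_of_notMem h]
    apply Set.indicator_of_notMem
    intro ⟨c1, c2, c3⟩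
    exact h (Set.mem_Icc.2 ⟨c2, by linarith⟩)

lemma gg_zero_left {x : ℝ} (hx : x ≤ 0 ∨ 1 < x) : (fun yv => gg (x, yv)) = 0 := by
  funext yv
  show simplexS.indicator ff (x, yv) = 0
  rcases hx with hx | hx
  · rcases eq_or_lt_of_le hx with rfl | hx'
    · by_cases h : ((0:ℝ), yv) ∈ simplexS
      · rw [Set.indicator_of_mem h]; simp [ff]
      · rw [Set.indicator_of_notMem h]
    · apply Set.indicator_of_notMem
      intro ⟨c1, _, _⟩
      simp only at c1
      linarith
  · apply Set.indicator_of_notMem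
    intro ⟨c1, c2, c3⟩
    simp only at c1 c2 c3
    linarith

lemma section_integrableOn {x : ℝ} (hx0 : 0 < x) (hx1 : x < 1) :
    IntegrableOn (fun yv => ff (x, yv)) (Set.Icc 0 (1-x)) := by
  apply ContinuousOn.integrableOn_compact isCompact_Icc
  apply ContinuousOn.div (by fun_prop) (by fun_prop)
  intro yv hyv
  obtain ⟨h1, h2⟩ := Set.mem_Icc.1 hyv
  exact pow_ne_zero 3 (by nlinarith)

lemma section_integral {x : ℝ} (hx : x ≠ 1) :
    (∫ yv, gg (x, yv)) = (Set.Ioo (0:ℝ) 1).indicator cO x := by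
  rcases le_or_gt x 0 with hx0 | hx0
  · rw [gg_zero_left (Or.inl hx0)]
    rw [Set.indicator_of_notMem (by simp [Set.mem_Ioo]; intro h; linarith)]
    simp
  rcases lt_or_ge x 1 with hx1 | hx1
  · rw [section_eq hx0 hx1, MeasureTheory.integral_indicator measurableSet_Icc,
      MeasureTheory.integral_Icc_eq_integral_Ioc,
      ← intervalIntegral.integral_of_le (by linarith : (0:ℝ) ≤ 1-x)]
    rw [Set.indicator_of_mem (Set.mem_Ioo.2 ⟨hx0, hx1⟩)]
    exact inner_eval hx0 hx1
  · have hx1' : 1 < x := lt_of_le_of_ne hx1 (Ne.symm hx)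
    rw [gg_zero_left (Or.inr hx1')]
    rw [Set.indicator_of_notMem (by simp [Set.mem_Ioo]; intro h; linarith)]
    simp

lemma indicator_cO_integrable : Integrable ((Set.Ioo (0:ℝ) 1).indicator cO) := by
  apply MeasureTheory.IntegrableOn.integrable_indicator _ measurableSet_Ioo
  apply Measure.integrableOn_of_bounded (by simp) cO_meas.aestronglyMeasurable (M := 1)
  rw [ae_restrict_iff' measurableSet_Ioo]
  exact ae_of_all _ (fun x hx => cO_bound x ⟨hx.1, hx.2.le⟩)

lemma ae_ne_one : ∀ᵐ x : ℝ, x ≠ (1:ℝ) := by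
  rw [ae_iff]
  have h : {x : ℝ | ¬x ≠ 1} = {1} := by ext x; simp
  rw [h]
  exact measure_singleton 1

lemma gg_integrable : Integrable gg (volume.prod volume) := by
  rw [MeasureTheory.integrable_prod_iff]
  · constructor
    · filter_upwards [ae_ne_one] with x hx
      rcases le_or_gt x 0 with hx0 | hx0
      · rw [gg_zero_left (Or.inl hx0)]
        exact integrable_zero _ _ _
      rcases lt_or_ge x 1 with hx1 | hx1
      · rw [section_eq hx0 hx1]
        exact (section_integrableOn hx0 hx1).integrable_indicator measurableSet_Icc
      · rw [gg_zero_left (Or.inr (lt_of_le_of_ne hx1 (Ne.symm hx)))]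
        exact integrable_zero _ _ _
    · apply (indicator_cO_integrable.congr ?_)
      filter_upwards [ae_ne_one] with x hx
      have : (∫ yv, ‖gg (x, yv)‖) = ∫ yv, gg (x, yv) := by
        congr 1
        funext yv
        exact Real.norm_of_nonneg (gg_nonneg _)
      rw [this, section_integral hx]
  · rw [← Measure.volume_eq_prod]
    exact hgm.aestronglyMeasurable

end Final

end CatalanAux

open MeasureTheory

/-- `∫_Δ x⁴y⁴/(1-x²-y²)³ dxdy = -49/384 + (9/64)·G`, where `G` is the Catalan constant. -/
theorem integral_simplex_x4y4_cube :
    ∫ p : ℝ × ℝ in {p : ℝ × ℝ | 0 ≤ p.1 ∧ 0 ≤ p.2 ∧ 0 ≤ 1 - p.1 - p.2},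
        p.1 ^ 4 * p.2 ^ 4 / (1 - p.1 ^ 2 - p.2 ^ 2) ^ 3 =
      -49 / 384 + (9 / 64) * ∑' n : ℕ, (-1 : ℝ) ^ n / (2 * n + 1) ^ 2 := by
  have h1 : (∫ p : ℝ × ℝ in simplexS, ff p) = ∫ p : ℝ × ℝ, gg p := by
    rw [MeasureTheory.integral_indicator hSm]
  have h2 : (∫ p : ℝ × ℝ, gg p) = ∫ x : ℝ, ∫ yv : ℝ, gg (x, yv) := by
    rw [Measure.volume_eq_prod]
    exact MeasureTheory.integral_prod gg gg_integrable
  have h3 : (∫ x : ℝ, ∫ yv : ℝ, gg (x, yv))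
      = ∫ x : ℝ, (Set.Ioo (0:ℝ) 1).indicator cO x := by
    apply MeasureTheory.integral_congr_ae
    filter_upwards [ae_ne_one] with x hx
    exact section_integral hx
  have h4 : (∫ x : ℝ, (Set.Ioo (0:ℝ) 1).indicator cO x) = ∫ x in (0:ℝ)..1, cO x := by
    rw [MeasureTheory.integral_indicator measurableSet_Ioo,
      intervalIntegral.integral_of_le (by norm_num : (0:ℝ) ≤ 1),
      MeasureTheory.integral_Ioc_eq_integral_Ioo]
  show (∫ p : ℝ × ℝ in simplexS, ff p) = _
  rw [h1, h2, h3, h4, outer]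
end

section
/- Let σ be the automorphism of ℚ[x,y] with σ(x) = -y, σ(y) = x. Define φ_{m,n} = x^m y^n + x^n y^m and ψ_{m,n} = x^m y^n - x^n y^m. Then the collection {φ_{m,n} : m ≥ n ≥ 0, m even, n even} ∪ {ψ_{m,n} : m > n > 0, m odd, n odd} is a ℚ-vector space basis of the subspace of σ-invariant polynomials in ℚ[x,y]. -/
open MvPolynomial

/-- `φ_{m,n} = x^m y^n + x^n y^m`. -/
noncomputable def phiPoly (m n : ℕ) : MvPolynomial (Fin 2) ℚ :=
  X 0 ^ m * X 1 ^ n + X 0 ^ n * X 1 ^ m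

/-- `ψ_{m,n} = x^m y^n - x^n y^m`. -/
noncomputable def psiPoly (m n : ℕ) : MvPolynomial (Fin 2) ℚ :=
  X 0 ^ m * X 1 ^ n - X 0 ^ n * X 1 ^ m

/-- Index for the family: pairs `m ≥ n ≥ 0` both even (for `φ`), and
pairs `m > n > 0` both odd (for `ψ`). -/
noncomputable def sigmaBasisFamily :
    ({p : ℕ × ℕ // p.2 ≤ p.1 ∧ Even p.1 ∧ Even p.2} ⊕
      {p : ℕ × ℕ // p.2 < p.1 ∧ 0 < p.2 ∧ Odd p.1 ∧ Odd p.2}) →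
    MvPolynomial (Fin 2) ℚ :=
  Sum.elim (fun s => phiPoly s.1.1 s.1.2) (fun s => psiPoly s.1.1 s.1.2)

noncomputable def D (a b : ℕ) : Fin 2 →₀ ℕ := Finsupp.single 0 a + Finsupp.single 1 b

@[simp] lemma D_apply0 (a b : ℕ) : D a b 0 = a := by simp [D, Finsupp.single_apply]
@[simp] lemma D_apply1 (a b : ℕ) : D a b 1 = b := by simp [D, Finsupp.single_apply]

lemma eq_D (d : Fin 2 →₀ ℕ) : d = D (d 0) (d 1) := by
  ext i; fin_cases i <;> simp

lemma D_inj {a b c d : ℕ} : D a b = D c d ↔ a = c ∧ b = d := by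
  constructor
  · intro h
    exact ⟨by simpa using congrArg (fun f => f 0) h, by simpa using congrArg (fun f => f 1) h⟩
  · rintro ⟨rfl, rfl⟩; rfl

lemma X_pow_mul' (a b : ℕ) :
    (X 0 ^ a * X 1 ^ b : MvPolynomial (Fin 2) ℚ) = monomial (D a b) 1 := by
  rw [X_pow_eq_monomial, X_pow_eq_monomial, monomial_mul, one_mul]; rfl

noncomputable def sig : MvPolynomial (Fin 2) ℚ →ₐ[ℚ] MvPolynomial (Fin 2) ℚ :=
  aeval ![-(X 1 : MvPolynomial (Fin 2) ℚ), X 0]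

lemma sig_monomial (e : Fin 2 →₀ ℕ) (c : ℚ) :
    sig (monomial e c) = monomial (D (e 1) (e 0)) ((-1) ^ (e 0) * c) := by
  rw [sig, aeval_monomial, Finsupp.prod_fintype _ _ (fun i => pow_zero _), Fin.prod_univ_two]
  simp only [Matrix.cons_val_zero, Matrix.cons_val_one, Matrix.head_cons]
  have h : (monomial (D (e 1) (e 0))) ((-1:ℚ) ^ (e 0) * c)
      = C ((-1:ℚ) ^ (e 0) * c) * (X 0 ^ (e 1) * X 1 ^ (e 0)) := by
    rw [X_pow_mul', C_mul_monomial, mul_one]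
  rw [h, neg_pow, algebraMap_eq]
  simp only [map_mul, map_pow, map_neg, map_one]
  ring

lemma coeff_sig (F : MvPolynomial (Fin 2) ℚ) (d : Fin 2 →₀ ℕ) :
    coeff d (sig F) = (-1 : ℚ) ^ (d 1) * coeff (D (d 1) (d 0)) F := by
  induction F using MvPolynomial.induction_on' with
  | add p q hp hq => simp [map_add, hp, hq]; ring
  | monomial e c =>
    rw [sig_monomial, coeff_monomial, coeff_monomial]
    have hiff : (D (e 1) (e 0) = d) ↔ (e = D (d 1) (d 0)) := by
      constructor
      · rintro rfl; simpa using (eq_D e)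
      · rintro rfl; simpa using (eq_D d).symm
    by_cases h : e = D (d 1) (d 0)
    · rw [if_pos (hiff.mpr h), if_pos h]
      have he0 : e 0 = d 1 := by rw [h]; simp
      rw [he0]
    · rw [if_neg (fun hc => h (hiff.mp hc)), if_neg h, mul_zero]

lemma coeff_phi (a b : ℕ) (e : Fin 2 →₀ ℕ) :
    coeff e (phiPoly a b) = (if D a b = e then (1:ℚ) else 0) + (if D b a = e then 1 else 0) := by
  rw [phiPoly, coeff_add, X_pow_mul', X_pow_mul', coeff_monomial, coeff_monomial]

lemma coeff_psi (a b : ℕ) (e : Fin 2 →₀ ℕ) :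
    coeff e (psiPoly a b) = (if D a b = e then (1:ℚ) else 0) - (if D b a = e then 1 else 0) := by
  rw [psiPoly, coeff_sub, X_pow_mul', X_pow_mul', coeff_monomial, coeff_monomial]

lemma phi_inv {a b : ℕ} (ha : Even a) (hb : Even b) : sig (phiPoly a b) = phiPoly a b := by
  simp only [sig, phiPoly, map_add, map_mul, map_pow, aeval_X, Matrix.cons_val_zero,
    Matrix.cons_val_one, Matrix.head_cons]
  rw [ha.neg_pow, hb.neg_pow]; ring

lemma psi_inv {a b : ℕ} (ha : Odd a) (hb : Odd b) : sig (psiPoly a b) = psiPoly a b := by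
  simp only [sig, psiPoly, map_sub, map_mul, map_pow, aeval_X, Matrix.cons_val_zero,
    Matrix.cons_val_one, Matrix.head_cons]
  rw [ha.neg_pow, hb.neg_pow]; ring

lemma support_step {F v : MvPolynomial (Fin 2) ℚ} {a b : ℕ} {r : ℚ}
    (hsupv : ∀ e, e ≠ D a b → e ≠ D b a → coeff e v = 0)
    (h1 : coeff (D a b) (F - r • v) = 0) (h2 : coeff (D b a) (F - r • v) = 0)
    (hd : coeff (D a b) F ≠ 0) :
    (F - r • v).support ⊂ F.support := by
  constructor
  · intro e he
    rw [mem_support_iff] at he ⊢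
    by_cases hea : e = D a b
    · exact absurd (hea ▸ he) (by simp [h1])
    by_cases heb : e = D b a
    · exact absurd (heb ▸ he) (by simp [h2])
    · intro hze
      apply he
      rw [coeff_sub, coeff_smul, hsupv e hea heb, hze]
      simp
  · intro hsub
    have : D a b ∈ (F - r • v).support := hsub (mem_support_iff.mpr hd)
    rw [mem_support_iff] at this
    exact this h1

lemma inv_mem_span : ∀ (n : ℕ) (F : MvPolynomial (Fin 2) ℚ), F.support.card ≤ n →
    sig F = F → F ∈ Submodule.span ℚ (Set.range sigmaBasisFamily) := by
  intro n
  induction n using Nat.strong_induction_on with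
  | _ n ih =>
  intro F hcard hF
  by_cases h0 : F = 0
  · simp [h0]
  have rel : ∀ d : Fin 2 →₀ ℕ, coeff d F = (-1:ℚ)^(d 1) * coeff (D (d 1) (d 0)) F := by
    intro d
    conv_lhs => rw [← hF]
    exact coeff_sig F d
  have hsw : ∀ e : Fin 2 →₀ ℕ, coeff e F ≠ 0 → coeff (D (e 1) (e 0)) F ≠ 0 := by
    intro e he hc
    exact he (by rw [rel e, hc, mul_zero])
  obtain ⟨d0, hd0⟩ := (support_nonempty (p := F)).mpr h0
  have hc0 : coeff d0 F ≠ 0 := mem_support_iff.mp hd0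
  obtain ⟨a, b, hba, hc⟩ : ∃ a b : ℕ, b ≤ a ∧ coeff (D a b) F ≠ 0 := by
    rcases le_total (d0 1) (d0 0) with h | h
    · exact ⟨d0 0, d0 1, h, by rw [← eq_D d0]; exact hc0⟩
    · exact ⟨d0 1, d0 0, h, hsw d0 hc0⟩
  set c : ℚ := coeff (D a b) F with hcdef
  have hrel1 : coeff (D b a) F = (-1:ℚ)^a * c := by simpa using rel (D b a)
  have hrel2 : c = (-1:ℚ)^b * coeff (D b a) F := by simpa [← hcdef] using rel (D a b)
  have hpar : (Even a ∧ Even b) ∨ (Odd a ∧ Odd b) := by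
    have hc2 : c = (-1:ℚ)^(a+b) * c := by
      rw [add_comm, pow_add, mul_assoc, ← hrel1, ← hrel2]
    have hev : Even (a + b) := by
      by_contra hodd
      rw [(Nat.not_even_iff_odd.mp hodd).neg_one_pow] at hc2
      exact hc (by linarith)
    rcases Nat.even_or_odd a with ha | ha
    · exact Or.inl ⟨ha, (Nat.even_add.mp hev).mp ha⟩
    · exact Or.inr ⟨ha, Nat.not_even_iff_odd.mp
        (fun hb => (Nat.not_even_iff_odd.mpr ha) ((Nat.even_add.mp hev).mpr hb))⟩
  rcases hpar with ⟨ha, hb⟩ | ⟨ha, hb⟩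
  · -- even case: use phiPoly a b
    set v := phiPoly a b with hv
    set k : ℚ := if a = b then 2 else 1 with hk
    have hk0 : k ≠ 0 := by rw [hk]; split <;> norm_num
    have hvd : coeff (D a b) v = k := by
      rw [hv, coeff_phi, hk, if_pos rfl]
      by_cases hab : a = b
      · subst hab; simp; norm_num
      · rw [if_neg (show ¬ D b a = D a b from fun h => hab ((D_inj.mp h).2)), if_neg hab]
        norm_num
    have hva : coeff (D b a) v = k := by
      rw [hv, coeff_phi, hk]
      by_cases hab : a = b
      · subst hab; simp; norm_num
      · rw [if_neg (show ¬ D a b = D b a from fun h => hab ((D_inj.mp h).1)),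
          if_pos rfl, if_neg hab]
        norm_num
    have hFba : coeff (D b a) F = c := by rw [hrel1, ha.neg_one_pow, one_mul]
    set G := F - (c / k) • v with hG
    have h1 : coeff (D a b) G = 0 := by
      rw [hG, coeff_sub, coeff_smul, hvd, ← hcdef, smul_eq_mul, div_mul_cancel₀ _ hk0, sub_self]
    have h2 : coeff (D b a) G = 0 := by
      rw [hG, coeff_sub, coeff_smul, hva, hFba, smul_eq_mul, div_mul_cancel₀ _ hk0, sub_self]
    have hvo : ∀ e, e ≠ D a b → e ≠ D b a → coeff e v = 0 := by
      intro e h1' h2'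
      rw [hv, coeff_phi, if_neg (fun h => h1' h.symm), if_neg (fun h => h2' h.symm), add_zero]
    have hss := support_step hvo h1 h2 hc
    have hGinv : sig G = G := by rw [hG, map_sub, map_smul, hF, phi_inv ha hb]
    have hGmem := ih G.support.card (lt_of_lt_of_le (Finset.card_lt_card hss) hcard) G le_rfl hGinv
    have hvmem : v ∈ Set.range sigmaBasisFamily :=
      ⟨Sum.inl ⟨(a, b), hba, ha, hb⟩, rfl⟩
    have : F = G + (c / k) • v := by rw [hG]; abel
    rw [this]
    exact Submodule.add_mem _ hGmem (Submodule.smul_mem _ _ (Submodule.subset_span hvmem))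
  · -- odd case: use psiPoly a b
    have hab : a ≠ b := by
      rintro rfl
      rw [ha.neg_one_pow] at hrel1
      rw [hrel1] at hrel2
      rw [ha.neg_one_pow] at hrel2
      exact hc (by linarith)
    have hlt : b < a := lt_of_le_of_ne hba (Ne.symm hab)
    have hbpos : 0 < b := hb.pos
    set v := psiPoly a b with hv
    have hvd : coeff (D a b) v = 1 := by
      rw [hv, coeff_psi, if_pos rfl,
        if_neg (show ¬ D b a = D a b from fun h => hab ((D_inj.mp h).2)), sub_zero]
    have hva : coeff (D b a) v = -1 := by
      rw [hv, coeff_psi,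
        if_neg (show ¬ D a b = D b a from fun h => hab ((D_inj.mp h).1)),
        if_pos rfl, zero_sub]
    have hFba : coeff (D b a) F = -c := by rw [hrel1, ha.neg_one_pow]; ring
    set G := F - c • v with hG
    have h1 : coeff (D a b) G = 0 := by
      rw [hG, coeff_sub, coeff_smul, hvd, ← hcdef, smul_eq_mul, mul_one, sub_self]
    have h2 : coeff (D b a) G = 0 := by
      rw [hG, coeff_sub, coeff_smul, hva, hFba, smul_eq_mul]; ring
    have hvo : ∀ e, e ≠ D a b → e ≠ D b a → coeff e v = 0 := by
      intro e h1' h2'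
      rw [hv, coeff_psi, if_neg (fun h => h1' h.symm), if_neg (fun h => h2' h.symm), sub_zero]
    have hss := support_step hvo h1 h2 hc
    have hGinv : sig G = G := by rw [hG, map_sub, map_smul, hF, psi_inv ha hb]
    have hGmem := ih G.support.card (lt_of_lt_of_le (Finset.card_lt_card hss) hcard) G le_rfl hGinv
    have hvmem : v ∈ Set.range sigmaBasisFamily :=
      ⟨Sum.inr ⟨(a, b), hlt, hbpos, ha, hb⟩, rfl⟩
    have : F = G + c • v := by rw [hG]; abel
    rw [this]
    exact Submodule.add_mem _ hGmem (Submodule.smul_mem _ _ (Submodule.subset_span hvmem))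

abbrev IdxT := ({p : ℕ × ℕ // p.2 ≤ p.1 ∧ Even p.1 ∧ Even p.2} ⊕
      {p : ℕ × ℕ // p.2 < p.1 ∧ 0 < p.2 ∧ Odd p.1 ∧ Odd p.2})

noncomputable def pt : IdxT → ℕ × ℕ := Sum.elim Subtype.val Subtype.val

lemma coeff_self (i : IdxT) :
    coeff (D (pt i).1 (pt i).2) (sigmaBasisFamily i) ≠ 0 := by
  rcases i with ⟨⟨m, n⟩, hmn, hm, hn⟩ | ⟨⟨m, n⟩, hnm, hn0, hm, hn⟩
  · show coeff (D m n) (phiPoly m n) ≠ 0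
    rw [coeff_phi, if_pos rfl]
    split_ifs <;> norm_num
  · show coeff (D m n) (psiPoly m n) ≠ 0
    rw [coeff_psi, if_pos rfl, if_neg (fun h => by have := (D_inj.mp h).1; omega), sub_zero]
    norm_num

lemma coeff_other (i j : IdxT) (hji : j ≠ i) :
    coeff (D (pt i).1 (pt i).2) (sigmaBasisFamily j) = 0 := by
  rcases i with ⟨⟨m, n⟩, hmn, hm, hn⟩ | ⟨⟨m, n⟩, hnm, hn0, hm, hn⟩ <;>
    rcases j with ⟨⟨m', n'⟩, hmn', hm', hn'⟩ | ⟨⟨m', n'⟩, hnm', hn0', hm', hn'⟩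
  · show coeff (D m n) (phiPoly m' n') = 0
    simp only at hmn hm hn hmn' hm' hn'
    have A : ¬ D m' n' = D m n := by
      intro h
      obtain ⟨e1, e2⟩ := D_inj.mp h
      exact hji (by simp only [Sum.inl.injEq, Subtype.mk.injEq, Prod.mk.injEq]; exact ⟨e1, e2⟩)
    have B : ¬ D n' m' = D m n := by
      intro h
      obtain ⟨e1, e2⟩ := D_inj.mp h
      have e3 : m' = m ∧ n' = n := by omega
      exact hji (by simp only [Sum.inl.injEq, Subtype.mk.injEq, Prod.mk.injEq]; exact e3)
    rw [coeff_phi, if_neg A, if_neg B, add_zero]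
  · show coeff (D m n) (psiPoly m' n') = 0
    simp only at hm hn hm' hn'
    have A : ¬ D m' n' = D m n := by
      intro h
      have e := (D_inj.mp h).1
      rw [e] at hm'
      exact (Nat.not_odd_iff_even.mpr hm) hm'
    have B : ¬ D n' m' = D m n := by
      intro h
      have e := (D_inj.mp h).1
      rw [e] at hn'
      exact (Nat.not_odd_iff_even.mpr hm) hn'
    rw [coeff_psi, if_neg A, if_neg B, sub_zero]
  · show coeff (D m n) (phiPoly m' n') = 0
    simp only at hm hn hm' hn'
    have A : ¬ D m' n' = D m n := by
      intro h
      have e := (D_inj.mp h).1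
      rw [e] at hm'
      exact (Nat.not_odd_iff_even.mpr hm') hm
    have B : ¬ D n' m' = D m n := by
      intro h
      have e := (D_inj.mp h).1
      rw [e] at hn'
      exact (Nat.not_odd_iff_even.mpr hn') hm
    rw [coeff_phi, if_neg A, if_neg B, add_zero]
  · show coeff (D m n) (psiPoly m' n') = 0
    simp only at hnm hnm' hm hn hm' hn'
    have A : ¬ D m' n' = D m n := by
      intro h
      obtain ⟨e1, e2⟩ := D_inj.mp h
      exact hji (by simp only [Sum.inr.injEq, Subtype.mk.injEq, Prod.mk.injEq]; exact ⟨e1, e2⟩)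
    have B : ¬ D n' m' = D m n := by
      intro h
      obtain ⟨e1, e2⟩ := D_inj.mp h
      omega
    rw [coeff_psi, if_neg A, if_neg B, sub_zero]

lemma lin_indep : LinearIndependent ℚ sigmaBasisFamily := by
  rw [linearIndependent_iff']
  intro s g hsum i hi
  have h := congrArg (coeff (D (pt i).1 (pt i).2)) hsum
  rw [coeff_sum, coeff_zero] at h
  simp only [coeff_smul, smul_eq_mul] at h
  rw [Finset.sum_eq_single_of_mem i hi
    (fun j hj hji => by rw [coeff_other i j hji, mul_zero])] at h
  exact (mul_eq_zero.mp h).resolve_right (coeff_self i)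

noncomputable def invSub : Submodule ℚ (MvPolynomial (Fin 2) ℚ) where
  carrier := {F | aeval ![-(X 1 : MvPolynomial (Fin 2) ℚ), X 0] F = F}
  add_mem' := by
    intro a b ha hb
    simp only [Set.mem_setOf_eq, map_add] at *
    rw [ha, hb]
  zero_mem' := by simp
  smul_mem' := by
    intro c x hx
    simp only [Set.mem_setOf_eq, map_smul] at *
    rw [hx]

/-- The family `{φ_{m,n} : m ≥ n ≥ 0 even} ∪ {ψ_{m,n} : m > n > 0 odd}` is a ℚ-basis of the
space of `σ`-invariant polynomials, where `σ(x) = -y`, `σ(y) = x`: it is linearly independent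
and spans exactly the `σ`-invariants. -/
theorem sigma_invariants_basis :
    LinearIndependent ℚ sigmaBasisFamily ∧
    (Submodule.span ℚ (Set.range sigmaBasisFamily) : Set (MvPolynomial (Fin 2) ℚ)) =
      {F | aeval ![-(X 1 : MvPolynomial (Fin 2) ℚ), X 0] F = F} := by
  refine ⟨lin_indep, ?_⟩
  apply Set.Subset.antisymm
  · intro F hF
    have hle : Submodule.span ℚ (Set.range sigmaBasisFamily) ≤ invSub := by
      rw [Submodule.span_le]
      rintro _ ⟨i, rfl⟩
      rcases i with ⟨⟨m, n⟩, hmn, hm, hn⟩ | ⟨⟨m, n⟩, hnm, hn0, hm, hn⟩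
      · exact phi_inv hm hn
      · exact psi_inv hm hn
    exact hle hF
  · intro F hF
    exact inv_mem_span F.support.card F le_rfl hF
end

section
/- Let k ≥ 1 be an integer and z = x+iy, w = x-iy so that zw = x²+y². Then ∫_Δ ((x²+y²)^k - 1)/(1-x²-y²) dx dy = -(1/2) ∫₀¹ ∑_{j=0}^{k-1} (2y²-2y+1)^j/(j+1) dy. In particular, this integral is a rational number whose denominator divides 2·L_k·L_{2k-1}, where L_m = lcm(1,...,m). -/
open MeasureTheory intervalIntegral

/-- `L_m = lcm(1, …, m)`. -/
def lcmUpTo (m : ℕ) : ℕ := (Finset.Icc 1 m).lcm id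

namespace IST

def Sset : Set (ℝ × ℝ) := {p : ℝ × ℝ | 0 ≤ p.1 ∧ 0 ≤ p.2 ∧ 0 ≤ 1 - p.1 - p.2}

lemma Sset_meas : MeasurableSet Sset := by
  apply MeasurableSet.inter
  · exact measurableSet_le measurable_const measurable_fst
  apply MeasurableSet.inter
  · exact measurableSet_le measurable_const measurable_snd
  · exact measurableSet_le measurable_const
      ((measurable_const.sub measurable_fst).sub measurable_snd)

lemma Sset_compact : IsCompact Sset := by
  have hsub : Sset ⊆ Set.Icc (0,0) (1,1) := by
    rintro ⟨x, y⟩ ⟨hx, hy, hxy⟩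
    simp only [Set.mem_Icc, Prod.mk_le_mk]
    refine ⟨⟨hx, hy⟩, by dsimp at *; constructor <;> linarith⟩
  have hclosed : IsClosed Sset := by
    apply IsClosed.inter (isClosed_le continuous_const continuous_fst)
    exact IsClosed.inter (isClosed_le continuous_const continuous_snd)
      (isClosed_le continuous_const ((continuous_const.sub continuous_fst).sub continuous_snd))
  exact (isCompact_Icc).of_isClosed_subset hclosed hsub

lemma fub (f : ℝ × ℝ → ℝ) (hf : Continuous f) :
    (∫ p in Sset, f p) = ∫ x in (0:ℝ)..1, ∫ y in (0:ℝ)..(1 - x), f (x, y) := by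
  have hint : IntegrableOn f Sset := hf.continuousOn.integrableOn_compact Sset_compact
  have h1 : (∫ p in Sset, f p) = ∫ p : ℝ × ℝ, Sset.indicator f p := by
    rw [MeasureTheory.integral_indicator Sset_meas]
  have h2 : Integrable (Sset.indicator f) := (integrable_indicator_iff Sset_meas).2 hint
  rw [h1, Measure.volume_eq_prod] at *
  rw [integral_prod _ h2]
  have h3 : ∀ x : ℝ, (∫ y : ℝ, Sset.indicator f (x, y)) =
      if 0 ≤ x ∧ x ≤ 1 then ∫ y in (0:ℝ)..(1-x), f (x, y) else 0 := by
    intro x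
    by_cases hx : 0 ≤ x ∧ x ≤ 1
    · rw [if_pos hx]
      have : ∀ y : ℝ, Sset.indicator f (x, y)
          = (Set.Icc (0:ℝ) (1-x)).indicator (fun y => f (x,y)) y := by
        intro y
        simp only [Set.indicator, Sset, Set.mem_setOf_eq, Set.mem_Icc]
        congr 1
        simp only [eq_iff_iff]
        constructor
        · rintro ⟨_, hy, hxy⟩; exact ⟨hy, by linarith⟩
        · rintro ⟨hy, hxy⟩; exact ⟨hx.1, hy, by linarith⟩
      simp_rw [this]
      rw [MeasureTheory.integral_indicator measurableSet_Icc, integral_Icc_eq_integral_Ioc,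
        ← intervalIntegral.integral_of_le (by linarith [hx.2] : (0:ℝ) ≤ 1 - x)]
    · rw [if_neg hx]
      have : ∀ y : ℝ, Sset.indicator f (x, y) = 0 := by
        intro y
        apply Set.indicator_of_notMem
        rintro ⟨h1', h2', h3'⟩
        exact hx ⟨h1', by dsimp at h3' h2' ⊢; linarith⟩
      simp_rw [this, MeasureTheory.integral_zero]
  simp_rw [h3]
  have : (∫ x : ℝ, if 0 ≤ x ∧ x ≤ 1 then ∫ y in (0:ℝ)..(1-x), f (x, y) else 0)
      = ∫ x : ℝ, (Set.Icc (0:ℝ) 1).indicator (fun x => ∫ y in (0:ℝ)..(1-x), f (x, y)) x := by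
    congr 1; funext x
    simp [Set.indicator, Set.mem_Icc]
  rw [this, MeasureTheory.integral_indicator measurableSet_Icc, integral_Icc_eq_integral_Ioc,
    ← intervalIntegral.integral_of_le (by norm_num : (0:ℝ) ≤ 1)]

noncomputable def Bfun (a b : ℕ) : ℝ := ∫ x in (0:ℝ)..1, x ^ a * (1 - x) ^ b

lemma intg (a b : ℕ) : IntervalIntegrable (fun x : ℝ => x ^ a * (1 - x) ^ b) volume 0 1 :=
  (Continuous.intervalIntegrable (by continuity) 0 1)

lemma Bsplit (a b : ℕ) : Bfun a b = Bfun a (b+1) + Bfun (a+1) b := by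
  unfold Bfun
  rw [← intervalIntegral.integral_add (intg a (b+1)) (intg (a+1) b)]
  apply intervalIntegral.integral_congr
  intro x _
  ring

lemma Bparts (a b : ℕ) : ((a:ℝ)+1) * Bfun a (b+1) = ((b:ℝ)+1) * Bfun (a+1) b := by
  have key : ∫ x in (0:ℝ)..1,
      (((a:ℝ)+1) * (x ^ a * (1 - x) ^ (b+1)) - ((b:ℝ)+1) * (x ^ (a+1) * (1 - x) ^ b)) = 0 := by
    have hderiv : ∀ x ∈ Set.uIcc (0:ℝ) 1, HasDerivAt (fun x : ℝ => x ^ (a+1) * (1 - x) ^ (b+1))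
        (((a:ℝ)+1) * (x ^ a * (1 - x) ^ (b+1)) - ((b:ℝ)+1) * (x ^ (a+1) * (1 - x) ^ b)) x := by
      intro x _
      have h1 : HasDerivAt (fun x : ℝ => x ^ (a+1)) (((a:ℝ)+1) * x ^ a) x := by
        simpa using hasDerivAt_pow (a+1) x
      have h2 : HasDerivAt (fun x : ℝ => (1 - x) ^ (b+1)) (-(((b:ℝ)+1) * (1 - x) ^ b)) x := by
        have h3 : HasDerivAt (fun x : ℝ => 1 - x) (-1) x := by
          simpa using (hasDerivAt_id x).const_sub 1
        have : HasDerivAt (fun x : ℝ => (1 - x) ^ (b+1)) (((b+1 : ℕ) : ℝ) * (1 - x) ^ (b+1-1) * -1) x :=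
          (hasDerivAt_pow (b+1) (1 - x)).comp x h3
        convert this using 1
        push_cast
        ring
      have : HasDerivAt (fun x : ℝ => x ^ (a+1) * (1 - x) ^ (b+1))
          (((a:ℝ)+1) * x ^ a * (1 - x) ^ (b+1) + x ^ (a+1) * (-(((b:ℝ)+1) * (1 - x) ^ b))) x :=
        h1.mul h2
      convert this using 1
      push_cast
      ring
    rw [intervalIntegral.integral_eq_sub_of_hasDerivAt hderiv
      (Continuous.intervalIntegrable (by continuity) 0 1)]
    norm_num
  have := intervalIntegral.integral_sub
    ((intg a (b+1)).const_mul (((a:ℝ)+1))) ((intg (a+1) b).const_mul (((b:ℝ)+1)))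
  rw [intervalIntegral.integral_const_mul, intervalIntegral.integral_const_mul] at this
  unfold Bfun
  have h := key
  rw [this] at h
  linarith

lemma Brec (a b : ℕ) : Bfun a (b+1) = (((b:ℝ)+1) / ((a:ℝ)+(b:ℝ)+2)) * Bfun a b := by
  have h1 := Bsplit a b
  have h2 := Bparts a b
  have hpos : ((a:ℝ)+(b:ℝ)+2) ≠ 0 := by positivity
  field_simp
  nlinarith [h1, h2]

lemma Bformula (a b : ℕ) :
    Bfun a b = ∑ m ∈ Finset.range (b+1), (b.choose m : ℝ) * (-1)^m / ((a:ℝ)+m+1) := by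
  unfold Bfun
  have hexp : ∀ x : ℝ, x ^ a * (1-x) ^ b
      = ∑ m ∈ Finset.range (b+1), (b.choose m : ℝ) * (-1)^m * x^(a+m) := by
    intro x
    rw [sub_eq_add_neg, add_comm (1:ℝ), add_pow]
    rw [Finset.mul_sum]
    apply Finset.sum_congr rfl
    intro m _
    rw [neg_pow, pow_add]
    ring
  simp_rw [hexp]
  rw [intervalIntegral.integral_finset_sum]
  · apply Finset.sum_congr rfl
    intro m _
    rw [intervalIntegral.integral_const_mul, integral_pow]
    push_cast
    ring
  · intro m _
    exact Continuous.intervalIntegrable (by continuity) 0 1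

lemma Rexp (j : ℕ) :
    (∫ y in (0:ℝ)..1, (2*y^2-2*y+1)^j)
      = ∑ i ∈ Finset.range (j+1), (j.choose i : ℝ) * Bfun (2*i) (2*(j-i)) := by
  have hexp : ∀ y : ℝ, (2*y^2-2*y+1)^j
      = ∑ i ∈ Finset.range (j+1), (j.choose i : ℝ) * (y ^ (2*i) * (1-y) ^ (2*(j-i))) := by
    intro y
    have h0 : (2*y^2-2*y+1) = y^2 + (1-y)^2 := by ring
    rw [h0, add_pow]
    apply Finset.sum_congr rfl
    intro i _
    rw [← pow_mul, ← pow_mul]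
    ring
  simp_rw [hexp]
  rw [intervalIntegral.integral_finset_sum
    (fun i _ => Continuous.intervalIntegrable (by continuity) 0 1)]
  apply Finset.sum_congr rfl
  intro i _
  rw [intervalIntegral.integral_const_mul]
  rfl

lemma Iexp (j : ℕ) :
    (∫ x in (0:ℝ)..1, ∫ y in (0:ℝ)..(1-x), (x^2+y^2)^j)
      = ∑ i ∈ Finset.range (j+1), ((j.choose i : ℝ) / (2*(j-i : ℕ)+1)) *
          Bfun (2*i) (2*(j-i)+1) := by
  have hinner : ∀ x : ℝ, (∫ y in (0:ℝ)..(1-x), (x^2+y^2)^j)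
      = ∑ i ∈ Finset.range (j+1), ((j.choose i : ℝ) / (2*(j-i : ℕ)+1)) *
          (x ^ (2*i) * (1-x) ^ (2*(j-i)+1)) := by
    intro x
    have hexp : ∀ y : ℝ, (x^2+y^2)^j
        = ∑ i ∈ Finset.range (j+1), (j.choose i : ℝ) * (x ^ (2*i) * y ^ (2*(j-i))) := by
      intro y
      rw [add_pow]
      apply Finset.sum_congr rfl
      intro i _
      rw [← pow_mul, ← pow_mul]
      ring
    simp_rw [hexp]
    rw [intervalIntegral.integral_finset_sum
      (fun i _ => Continuous.intervalIntegrable (by continuity) 0 (1-x))]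
    apply Finset.sum_congr rfl
    intro i _
    rw [intervalIntegral.integral_const_mul, intervalIntegral.integral_const_mul, integral_pow]
    rw [zero_pow (by omega)]
    push_cast
    field_simp
    ring
  simp_rw [hinner]
  rw [intervalIntegral.integral_finset_sum
    (fun i _ => Continuous.intervalIntegrable (by continuity) 0 1)]
  apply Finset.sum_congr rfl
  intro i _
  rw [intervalIntegral.integral_const_mul]
  rfl

lemma Ij (j : ℕ) :
    (∫ p in Sset, (p.1^2+p.2^2)^j)
      = (1/(2*(j:ℝ)+2)) * ∫ y in (0:ℝ)..1, (2*y^2-2*y+1)^j := by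
  have h1 : (∫ p in Sset, (p.1^2+p.2^2)^j)
      = ∫ x in (0:ℝ)..1, ∫ y in (0:ℝ)..(1-x), (x^2+y^2)^j := by
    rw [fub (fun p => (p.1^2+p.2^2)^j) (by continuity)]
  rw [h1, Iexp, Rexp, Finset.mul_sum]
  apply Finset.sum_congr rfl
  intro i hi
  have hij : i ≤ j := by simpa using Nat.lt_succ_iff.mp (Finset.mem_range.mp hi)
  rw [Brec (2*i) (2*(j-i))]
  have hc : ((j-i : ℕ):ℝ) = (j:ℝ) - (i:ℝ) := Nat.cast_sub hij
  have hne1 : (2*((j-i:ℕ):ℝ)+1) ≠ 0 := by positivity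
  have hne2 : ((2*i:ℕ):ℝ) + ((2*(j-i):ℕ):ℝ) + 2 ≠ 0 := by positivity
  have hne3 : (2*(j:ℝ)+2) ≠ 0 := by positivity
  have heq : ((2*i:ℕ):ℝ) + ((2*(j-i):ℕ):ℝ) + 2 = 2*(j:ℝ)+2 := by
    push_cast [hc]; ring
  rw [heq]
  have hne1' : 2*((j:ℝ)-(i:ℝ))+1 ≠ 0 := by rw [← hc]; positivity
  push_cast [hc]
  field_simp [hne1', hne3]

lemma aelem (k : ℕ) : ∀ᵐ p ∂(volume.restrict Sset),
    ((p.1 ^ 2 + p.2 ^ 2) ^ k - 1) / (1 - p.1 ^ 2 - p.2 ^ 2)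
      = -∑ j ∈ Finset.range k, (p.1 ^ 2 + p.2 ^ 2) ^ j := by
  have hzero : volume ({((1:ℝ),(0:ℝ)), ((0:ℝ),(1:ℝ))} : Set (ℝ × ℝ)) = 0 :=
    ((Set.finite_singleton _).insert _).measure_zero _
  have hsub : {p : ℝ × ℝ | ¬ (((p.1 ^ 2 + p.2 ^ 2) ^ k - 1) / (1 - p.1 ^ 2 - p.2 ^ 2)
      = -∑ j ∈ Finset.range k, (p.1 ^ 2 + p.2 ^ 2) ^ j)} ∩ Sset
      ⊆ ({((1:ℝ),(0:ℝ)), ((0:ℝ),(1:ℝ))} : Set (ℝ × ℝ)) := by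
    rintro ⟨x, y⟩ ⟨hne, hx, hy, hxy⟩
    simp only [Set.mem_setOf_eq] at hne
    dsimp at hx hy hxy hne ⊢
    by_cases hq : x ^ 2 + y ^ 2 = 1
    · have hx1 : x ≤ 1 := by nlinarith
      have hy1 : y ≤ 1 := by nlinarith
      have h1 : x ^ 2 ≤ x := by nlinarith
      have h2 : y ^ 2 ≤ y := by nlinarith
      have hs : x + y ≤ 1 := by linarith
      have hx2 : x ^ 2 = x := by nlinarith
      have hy2 : y ^ 2 = y := by nlinarith
      have : x = 0 ∨ x = 1 := by
        have hm : x * (x - 1) = 0 := by nlinarith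
        rcases mul_eq_zero.mp hm with h | h
        · left; exact h
        · right; linarith
      rcases this with h | h
      · right; simp only [Set.mem_singleton_iff, Prod.mk.injEq]
        constructor <;> nlinarith
      · left; simp only [Prod.mk.injEq]
        constructor <;> nlinarith
    · exfalso
      apply hne
      rw [geom_sum_eq hq k]
      rw [eq_comm, neg_eq_iff_eq_neg, ← div_neg]
      congr 1
      ring
  have hz : volume ({p : ℝ × ℝ | ¬ (((p.1 ^ 2 + p.2 ^ 2) ^ k - 1) / (1 - p.1 ^ 2 - p.2 ^ 2)
      = -∑ j ∈ Finset.range k, (p.1 ^ 2 + p.2 ^ 2) ^ j)} ∩ Sset) = 0 :=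
    measure_mono_null hsub hzero
  rw [ae_restrict_iff' Sset_meas, ae_iff]
  apply measure_mono_null _ hz
  intro p hp
  simp only [Set.mem_setOf_eq, Set.mem_inter_iff] at hp ⊢
  tauto

/-- integer numerator of `lcmUpTo n * Bfun a b`. -/
def zB (a b n : ℕ) : ℤ :=
  ∑ m ∈ Finset.range (b+1), (b.choose m : ℤ) * (-1)^m * ((lcmUpTo n / (a+m+1) : ℕ) : ℤ)

lemma lcm_dvd_of_le {d n : ℕ} (h1 : 1 ≤ d) (h2 : d ≤ n) : d ∣ lcmUpTo n :=
  Finset.dvd_lcm (Finset.mem_Icc.mpr ⟨h1, h2⟩)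

lemma B_int (a b n : ℕ) (h : a + b + 1 ≤ n) :
    (lcmUpTo n : ℝ) * Bfun a b = ((zB a b n : ℤ) : ℝ) := by
  rw [Bformula, Finset.mul_sum, zB, Int.cast_sum]
  apply Finset.sum_congr rfl
  intro m hm
  have hmb : m ≤ b := Nat.lt_succ_iff.mp (Finset.mem_range.mp hm)
  have hdvd : (a+m+1) ∣ lcmUpTo n := lcm_dvd_of_le (by omega) (by omega)
  obtain ⟨c, hcdef⟩ := hdvd
  have hdiv : lcmUpTo n / (a+m+1) = c := by rw [hcdef]; exact Nat.mul_div_cancel_left _ (by omega)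
  rw [hdiv, hcdef]
  have hne : ((a:ℝ)+(m:ℝ)+1) ≠ 0 := by positivity
  push_cast
  field_simp

end IST
open MeasureTheory intervalIntegral

namespace IST
lemma lcm_ne_zero (n : ℕ) : lcmUpTo n ≠ 0 := by
  unfold lcmUpTo
  intro h
  rw [Finset.lcm_eq_zero_iff] at h
  obtain ⟨x, hx, hx0⟩ := h
  rw [Finset.mem_Icc] at hx
  simp only [id_eq] at hx0
  omega

lemma Rmul (k j : ℕ) (hj : j < k) :
    (∫ y in (0:ℝ)..1, (2*y^2-2*y+1)^j) * ((lcmUpTo (2*k-1) : ℕ) : ℝ)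
      = ((∑ i ∈ Finset.range (j+1), (j.choose i : ℤ) * zB (2*i) (2*(j-i)) (2*k-1) : ℤ) : ℝ) := by
  rw [Rexp, Int.cast_sum, Finset.sum_mul]
  apply Finset.sum_congr rfl
  intro i hi
  have hij : i ≤ j := Nat.lt_succ_iff.mp (Finset.mem_range.mp hi)
  have hle : 2*i + 2*(j-i) + 1 ≤ 2*k-1 := by omega
  rw [Int.cast_mul, ← B_int _ _ _ hle]
  push_cast
  ring
end IST

/-- For `k ≥ 1`, `∫_Δ ((x²+y²)^k - 1)/(1-x²-y²) dxdy
= -(1/2) ∫₀¹ ∑_{j=0}^{k-1} (2y²-2y+1)^j/(j+1) dy`; in particular this is a rational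
number whose denominator divides `2·L_k·L_{2k-1}`. -/
theorem integral_second_type (k : ℕ) (hk : 1 ≤ k) :
    (∫ p : ℝ × ℝ in {p : ℝ × ℝ | 0 ≤ p.1 ∧ 0 ≤ p.2 ∧ 0 ≤ 1 - p.1 - p.2},
        ((p.1 ^ 2 + p.2 ^ 2) ^ k - 1) / (1 - p.1 ^ 2 - p.2 ^ 2)) =
      -(1 / 2) *
        ∫ y in (0 : ℝ)..1, ∑ j ∈ Finset.range k, (2 * y ^ 2 - 2 * y + 1) ^ j / (j + 1) ∧
    ∃ a : ℤ,
      (∫ p : ℝ × ℝ in {p : ℝ × ℝ | 0 ≤ p.1 ∧ 0 ≤ p.2 ∧ 0 ≤ 1 - p.1 - p.2},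
          ((p.1 ^ 2 + p.2 ^ 2) ^ k - 1) / (1 - p.1 ^ 2 - p.2 ^ 2)) =
        (a : ℝ) / ((2 * lcmUpTo k * lcmUpTo (2 * k - 1) : ℕ) : ℝ) := by
  have hset : {p : ℝ × ℝ | 0 ≤ p.1 ∧ 0 ≤ p.2 ∧ 0 ≤ 1 - p.1 - p.2} = IST.Sset := rfl
  have hval : (∫ p in IST.Sset, ((p.1 ^ 2 + p.2 ^ 2) ^ k - 1) / (1 - p.1 ^ 2 - p.2 ^ 2))
      = -∑ j ∈ Finset.range k,
          (1/(2*(j:ℝ)+2)) * ∫ y in (0:ℝ)..1, (2*y^2-2*y+1)^j := by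
    rw [integral_congr_ae (IST.aelem k), MeasureTheory.integral_neg,
      MeasureTheory.integral_finset_sum _
        (fun j _ => ((by continuity : Continuous (fun p : ℝ × ℝ => (p.1^2+p.2^2)^j)).continuousOn.integrableOn_compact IST.Sset_compact))]
    congr 1
    exact Finset.sum_congr rfl fun j _ => IST.Ij j
  have hrhs : (∫ y in (0:ℝ)..1, ∑ j ∈ Finset.range k, (2*y^2-2*y+1)^j/((j:ℝ)+1))
      = ∑ j ∈ Finset.range k, (∫ y in (0:ℝ)..1, (2*y^2-2*y+1)^j)/((j:ℝ)+1) := by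
    rw [intervalIntegral.integral_finset_sum
      (fun j _ => Continuous.intervalIntegrable (by continuity) 0 1)]
    exact Finset.sum_congr rfl fun j _ => intervalIntegral.integral_div _ _
  constructor
  · rw [hset, hval, hrhs, neg_mul, Finset.mul_sum, neg_inj]
    apply Finset.sum_congr rfl
    intro j _
    rw [one_div_mul_eq_div, div_mul_div_comm, one_mul]
    congr 1
    ring
  · refine ⟨-∑ j ∈ Finset.range k, ((lcmUpTo k/(j+1) : ℕ) : ℤ) *
      ∑ i ∈ Finset.range (j+1), (j.choose i : ℤ) * IST.zB (2*i) (2*(j-i)) (2*k-1), ?_⟩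
    have hN : ((2 * lcmUpTo k * lcmUpTo (2 * k - 1) : ℕ) : ℝ) ≠ 0 := by
      have := IST.lcm_ne_zero k
      have := IST.lcm_ne_zero (2*k-1)
      positivity
    rw [hset, hval, eq_div_iff hN, neg_mul, Finset.sum_mul, Int.cast_neg, Int.cast_sum, neg_inj]
    apply Finset.sum_congr rfl
    intro j hj
    have hjk : j < k := Finset.mem_range.mp hj
    have hdvd : (j+1) ∣ lcmUpTo k := IST.lcm_dvd_of_le (by omega) (by omega)
    obtain ⟨c, hcdef⟩ := hdvd
    have hdiv : lcmUpTo k / (j+1) = c := by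
      rw [hcdef]; exact Nat.mul_div_cancel_left _ (by omega)
    have hR := IST.Rmul k j hjk
    have h1 : ((j:ℝ)+1) ≠ 0 := by positivity
    rw [hdiv, hcdef, Int.cast_mul]
    rw [← hR]
    push_cast
    field_simp
end

section
/- Let σ be the automorphism of ℚ[x,y] with σ(x) = -y, σ(y) = x, and D₁F = ∂_x(F/x), D₂F = ∂_y(F/y). If F ∈ ℚ[x,y] is fixed by σ and divisible by xy, then D₂D₁F and (D₁+D₂)F are polynomials fixed by σ. -/
open MvPolynomial

/-- `D₁F = ∂_x(F/x)`. -/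
noncomputable def Dop1 (G : ℝ → ℝ → ℝ) : ℝ → ℝ → ℝ := fun a b => deriv (fun s => G s b / s) a

/-- `D₂F = ∂_y(F/y)`. -/
noncomputable def Dop2 (G : ℝ → ℝ → ℝ) : ℝ → ℝ → ℝ := fun a b => deriv (fun s => G a s / s) b


lemma sig_apply (P : MvPolynomial (Fin 2) ℚ) :
    sig P = aeval ![-(X 1 : MvPolynomial (Fin 2) ℚ), X 0] P := rfl

lemma sig_X0 : sig (X 0) = -(X 1 : MvPolynomial (Fin 2) ℚ) := by
  simp [sig_apply]

lemma sig_X1 : sig (X 1) = (X 0 : MvPolynomial (Fin 2) ℚ) := by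
  simp [sig_apply]

lemma sig_pderiv (P : MvPolynomial (Fin 2) ℚ) :
    sig (pderiv 0 P) = -(pderiv 1 (sig P)) ∧ sig (pderiv 1 P) = pderiv 0 (sig P) := by
  induction P using MvPolynomial.induction_on with
  | C q => simp [pderiv_C]
  | add p q hp hq =>
      constructor <;> simp [hp.1, hp.2, hq.1, hq.2] <;> ring
  | mul_X p n ih =>
      fin_cases n <;>
        simp only [pderiv_mul, pderiv_X, map_add, map_mul, ih.1, ih.2, sig_X0, sig_X1] <;>
        constructor <;> ring_nf <;>
        simp [pderiv_mul, pderiv_X, ih.1, ih.2, sig_X0, sig_X1] <;> ring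

lemma pderiv_swap (P : MvPolynomial (Fin 2) ℚ) :
    pderiv 1 (pderiv 0 P) = pderiv 0 (pderiv 1 P) := by
  induction P using MvPolynomial.induction_on with
  | C q => simp [pderiv_C]
  | add p q hp hq => simp [hp, hq]
  | mul_X p n ih =>
      fin_cases n <;> simp [pderiv_mul, pderiv_X, ih] <;> ring

lemma hasDerivAt_fst (P : MvPolynomial (Fin 2) ℚ) (b a : ℝ) :
    HasDerivAt (fun s : ℝ => aeval ![s, b] P) (aeval ![a, b] (pderiv 0 P)) a := by
  induction P using MvPolynomial.induction_on with
  | C q => simpa [pderiv_C] using hasDerivAt_const a ((algebraMap ℚ ℝ) q)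
  | add p q hp hq => simpa [map_add, Pi.add_def] using hp.add hq
  | mul_X p n ih =>
      fin_cases n
      · have h2 : HasDerivAt (fun s : ℝ => s) 1 a := hasDerivAt_id a
        have := ih.mul h2
        simp only [pderiv_mul, pderiv_X, map_add, map_mul, aeval_X]
        simpa [Pi.mul_def, Matrix.cons_val_zero, mul_comm, add_comm] using this
      · have := ih.mul_const b
        simp only [pderiv_mul, pderiv_X, map_add, map_mul, aeval_X]
        simpa [Matrix.cons_val_one, Matrix.head_cons] using this

lemma hasDerivAt_snd (P : MvPolynomial (Fin 2) ℚ) (a b : ℝ) :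
    HasDerivAt (fun s : ℝ => aeval ![a, s] P) (aeval ![a, b] (pderiv 1 P)) b := by
  induction P using MvPolynomial.induction_on with
  | C q => simpa [pderiv_C] using hasDerivAt_const b ((algebraMap ℚ ℝ) q)
  | add p q hp hq => simpa [map_add, Pi.add_def] using hp.add hq
  | mul_X p n ih =>
      fin_cases n
      · have := ih.mul_const a
        simp only [pderiv_mul, pderiv_X, map_add, map_mul, aeval_X]
        simpa [Matrix.cons_val_zero, mul_comm] using this
      · have h2 : HasDerivAt (fun s : ℝ => s) 1 b := hasDerivAt_id b
        have := ih.mul h2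
        simp only [pderiv_mul, pderiv_X, map_add, map_mul, aeval_X]
        simpa [Pi.mul_def, Matrix.cons_val_one, Matrix.head_cons, mul_comm, add_comm] using this

/-- If `F ∈ ℚ[x,y]` is fixed by `σ : (x,y) ↦ (-y,x)` and divisible by `xy`, then
`D₂D₁F` and `(D₁+D₂)F` are polynomials fixed by `σ` (here `D₁F = ∂_x(F/x)`,
`D₂F = ∂_y(F/y)`, computed pointwise away from the axes). -/
theorem Dops_preserve_sigma_invariance (F : MvPolynomial (Fin 2) ℚ)
    (hσ : aeval ![-(X 1 : MvPolynomial (Fin 2) ℚ), X 0] F = F)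
    (hdvd : (X 0 : MvPolynomial (Fin 2) ℚ) * X 1 ∣ F) :
    ∃ G H : MvPolynomial (Fin 2) ℚ,
      aeval ![-(X 1 : MvPolynomial (Fin 2) ℚ), X 0] G = G ∧
      aeval ![-(X 1 : MvPolynomial (Fin 2) ℚ), X 0] H = H ∧
      ∀ x y : ℝ, x ≠ 0 → y ≠ 0 →
        Dop2 (Dop1 (fun a b : ℝ => aeval ![a, b] F)) x y = aeval ![x, y] G ∧
        Dop1 (fun a b : ℝ => aeval ![a, b] F) x y +
            Dop2 (fun a b : ℝ => aeval ![a, b] F) x y = aeval ![x, y] H := by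
  obtain ⟨Q, hQ⟩ := hdvd
  have hσF : sig F = F := hσ
  -- Q is anti-invariant
  have hσQ : sig Q = -Q := by
    have h1 : sig F = -((X 0 : MvPolynomial (Fin 2) ℚ) * X 1 * sig Q) := by
      rw [hQ, map_mul, map_mul, sig_X0, sig_X1]; ring
    have h2 : (X 0 : MvPolynomial (Fin 2) ℚ) * X 1 * sig Q
        = X 0 * X 1 * (-Q) := by
      have := h1.symm.trans hσF
      rw [hQ] at this
      rw [mul_neg]
      linear_combination -this
    exact mul_left_cancel₀ (mul_ne_zero (X_ne_zero 0) (X_ne_zero 1)) h2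
  refine ⟨pderiv 1 (pderiv 0 Q), X 1 * pderiv 0 Q + X 0 * pderiv 1 Q, ?_, ?_, ?_⟩
  · show sig _ = _
    rw [(sig_pderiv (pderiv 0 Q)).2, (sig_pderiv Q).1, hσQ, pderiv_swap]
    simp
  · show sig _ = _
    rw [map_add, map_mul, map_mul, sig_X0, sig_X1,
      (sig_pderiv Q).1, (sig_pderiv Q).2, hσQ]
    simp only [map_neg]
    ring
  · intro x y hx hy
    set Ff : ℝ → ℝ → ℝ := fun a b : ℝ => aeval ![a, b] F with hFf
    have hevalF : ∀ a b : ℝ, aeval ![a, b] F = a * b * aeval ![a, b] Q := by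
      intro a b; rw [hQ]; simp
    have hDop1 : ∀ s b : ℝ, s ≠ 0 →
        Dop1 Ff s b = b * aeval ![s, b] (pderiv 0 Q) := by
      intro s b hs
      have hEq : (fun t : ℝ => Ff t b / t) =ᶠ[nhds s]
          (fun t : ℝ => b * aeval ![t, b] Q) := by
        filter_upwards [eventually_ne_nhds hs] with t ht
        rw [hFf]; simp only
        rw [hevalF t b]
        field_simp
      rw [Dop1, hEq.deriv_eq]
      exact ((hasDerivAt_fst Q b s).const_mul b).deriv
    have hDop2 : ∀ a b : ℝ, b ≠ 0 →
        Dop2 Ff a b = a * aeval ![a, b] (pderiv 1 Q) := by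
      intro a b hb
      have hEq : (fun t : ℝ => Ff a t / t) =ᶠ[nhds b]
          (fun t : ℝ => a * aeval ![a, t] Q) := by
        filter_upwards [eventually_ne_nhds hb] with t ht
        rw [hFf]; simp only
        rw [hevalF a t]
        field_simp
      rw [Dop2, hEq.deriv_eq]
      exact ((hasDerivAt_snd Q a b).const_mul a).deriv
    constructor
    · have hEq : (fun t : ℝ => Dop1 Ff x t / t) =ᶠ[nhds y]
          (fun t : ℝ => aeval ![x, t] (pderiv 0 Q)) := by
        filter_upwards [eventually_ne_nhds hy] with t ht
        rw [hDop1 x t hx]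
        field_simp
      rw [Dop2, hEq.deriv_eq]
      exact (hasDerivAt_snd (pderiv 0 Q) x y).deriv
    · rw [hDop1 x y hx, hDop2 x y hy]
      simp only [map_add, map_mul, aeval_X]
      simp [mul_comm]
end

section
/- Let t ≥ 1 be an integer and F ∈ ℚ[x,y] be divisible by x^{t+1} y^{t+1}, say F = x^{t+1} y^{t+1} f. Write g = 1-x²-y². Then the integral over the boundary path of the simplex Δ of the 1-form F dy/(x g^t) reduces to the integral over the segment from (1,0) to (0,1), and equals (1/2^t) ∫₀¹ y·f(1-y,y) dy, which is a rational number. -/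
open MvPolynomial MeasureTheory

lemma poly_integral_rat (p : Polynomial ℚ) :
    ∃ q : ℚ, (∫ x in (0:ℝ)..1, Polynomial.aeval x p) = (q : ℝ) := by
  set P := p.map (algebraMap ℚ ℝ) with hP
  have heval : ∀ x : ℝ, Polynomial.aeval x p = P.eval x := by
    intro x; rw [hP, Polynomial.eval_map, Polynomial.aeval_def]
  refine ⟨∑ i ∈ Finset.range (P.natDegree + 1), p.coeff i / (i + 1), ?_⟩
  have hrw : ∀ x : ℝ, Polynomial.aeval x p
      = ∑ i ∈ Finset.range (P.natDegree + 1), (p.coeff i : ℝ) * x ^ i := by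
    intro x
    rw [heval, Polynomial.eval_eq_sum_range]
    refine Finset.sum_congr rfl fun i _ => ?_
    rw [hP, Polynomial.coeff_map]; simp
  simp only [hrw]
  rw [intervalIntegral.integral_finset_sum (fun i _ => by
    exact (Continuous.intervalIntegrable (by continuity) 0 1))]
  push_cast
  refine Finset.sum_congr rfl fun i _ => ?_
  rw [intervalIntegral.integral_const_mul, integral_pow]
  simp [div_eq_mul_inv]

/-- `F = x^{t+1} y^{t+1} f`, evaluated at a real point. -/
noncomputable def Fval (t : ℕ) (f : MvPolynomial (Fin 2) ℚ) (a b : ℝ) : ℝ :=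
  a ^ (t + 1) * b ^ (t + 1) * aeval ![a, b] f

/-- `g = 1 - x² - y²`. -/
def gval (a b : ℝ) : ℝ := 1 - a ^ 2 - b ^ 2

/-- Let `t ≥ 1` and `F = x^{t+1} y^{t+1} f` with `f ∈ ℚ[x,y]`. The integral of the 1-form
`F dy/(x g^t)` over the boundary of the simplex `Δ` (bottom segment `(s,0)`, the segment
from `P=(1,0)` to `Q=(0,1)` parametrized by `(1-s,s)`, and the left segment `(0,1-s)`)
reduces to the integral over the segment `[P,Q]`, equals `(1/2^t) ∫₀¹ y f(1-y,y) dy`,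
and is a rational number. -/
theorem boundary_integral_rational (t : ℕ) (ht : 1 ≤ t) (f : MvPolynomial (Fin 2) ℚ) :
    ((∫ s in (0 : ℝ)..1, Fval t f s 0 / (s * gval s 0 ^ t) * 0) +
        (∫ s in (0 : ℝ)..1, Fval t f (1 - s) s / ((1 - s) * gval (1 - s) s ^ t) * 1) +
        ∫ s in (0 : ℝ)..1, Fval t f 0 (1 - s) / (0 * gval 0 (1 - s) ^ t) * (-1)) =
      (∫ s in (0 : ℝ)..1, Fval t f (1 - s) s / ((1 - s) * gval (1 - s) s ^ t) * 1) ∧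
    ((∫ s in (0 : ℝ)..1, Fval t f s 0 / (s * gval s 0 ^ t) * 0) +
        (∫ s in (0 : ℝ)..1, Fval t f (1 - s) s / ((1 - s) * gval (1 - s) s ^ t) * 1) +
        ∫ s in (0 : ℝ)..1, Fval t f 0 (1 - s) / (0 * gval 0 (1 - s) ^ t) * (-1)) =
      (1 / 2 ^ t) * ∫ y in (0 : ℝ)..1, y * aeval ![1 - y, y] f ∧
    ∃ q : ℚ,
      ((∫ s in (0 : ℝ)..1, Fval t f s 0 / (s * gval s 0 ^ t) * 0) +
          (∫ s in (0 : ℝ)..1, Fval t f (1 - s) s / ((1 - s) * gval (1 - s) s ^ t) * 1) +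
          ∫ s in (0 : ℝ)..1, Fval t f 0 (1 - s) / (0 * gval 0 (1 - s) ^ t) * (-1)) =
        (q : ℝ) := by
  have h1 : (∫ s in (0 : ℝ)..1, Fval t f s 0 / (s * gval s 0 ^ t) * 0) = 0 := by
    simp
  have h3 : (∫ s in (0 : ℝ)..1, Fval t f 0 (1 - s) / (0 * gval 0 (1 - s) ^ t) * (-1)) = 0 := by
    simp [Fval]
  have hred : ((∫ s in (0 : ℝ)..1, Fval t f s 0 / (s * gval s 0 ^ t) * 0) +
        (∫ s in (0 : ℝ)..1, Fval t f (1 - s) s / ((1 - s) * gval (1 - s) s ^ t) * 1) +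
        ∫ s in (0 : ℝ)..1, Fval t f 0 (1 - s) / (0 * gval 0 (1 - s) ^ t) * (-1)) =
      (∫ s in (0 : ℝ)..1, Fval t f (1 - s) s / ((1 - s) * gval (1 - s) s ^ t) * 1) := by
    rw [h1, h3]; ring
  -- pointwise identity away from s = 1
  have key : ∀ s : ℝ, s ≠ 1 →
      Fval t f (1 - s) s / ((1 - s) * gval (1 - s) s ^ t) * 1
        = (1 / 2 ^ t) * (s * aeval ![1 - s, s] f) := by
    intro s hs1
    rcases eq_or_ne s 0 with rfl | hs0
    · simp [Fval, zero_pow (Nat.succ_ne_zero t)]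
    · have hg : gval (1 - s) s = 2 * s * (1 - s) := by unfold gval; ring
      have h1s : (1 : ℝ) - s ≠ 0 := sub_ne_zero.mpr (Ne.symm hs1)
      unfold Fval
      rw [hg, mul_pow, mul_pow]
      have ht' : ∃ m, t = m + 1 := ⟨t - 1, (Nat.succ_pred_eq_of_pos ht).symm⟩
      obtain ⟨m, rfl⟩ := ht'
      field_simp
      ring
  have hmid : (∫ s in (0 : ℝ)..1, Fval t f (1 - s) s / ((1 - s) * gval (1 - s) s ^ t) * 1)
      = (1 / 2 ^ t) * ∫ y in (0 : ℝ)..1, y * aeval ![1 - y, y] f := by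
    rw [← intervalIntegral.integral_const_mul]
    apply intervalIntegral.integral_congr_ae
    have hnull : (volume : Measure ℝ) {(1 : ℝ)} = 0 := measure_singleton 1
    refine (MeasureTheory.ae_iff.2 (measure_mono_null ?_ hnull))
    intro s hs
    simp only [Set.mem_setOf_eq, not_forall] at hs
    by_contra h
    exact hs.2 (key s (by simpa using h))
  refine ⟨hred, hred.trans hmid, ?_⟩
  -- rationality
  set p : Polynomial ℚ :=
    Polynomial.X * MvPolynomial.aeval ![1 - Polynomial.X, Polynomial.X] f with hp
  have hcomp : ∀ y : ℝ, y * aeval ![1 - y, y] f = Polynomial.aeval y p := by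
    intro y
    rw [hp, map_mul, Polynomial.aeval_X,
      MvPolynomial.comp_aeval_apply (f := ![1 - Polynomial.X, Polynomial.X])
        (Polynomial.aeval y) f]
    have harg : (fun i => Polynomial.aeval y (![1 - Polynomial.X, (Polynomial.X : Polynomial ℚ)] i))
        = ![1 - y, y] := by
      funext i; fin_cases i <;> simp
    rw [harg]
  obtain ⟨q, hq⟩ := poly_integral_rat p
  refine ⟨q / 2 ^ t, ?_⟩
  rw [hred, hmid]
  simp only [hcomp]
  rw [hq]
  push_cast
  ring
end
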